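/- arXiv:0805.1272 — 4 statements merged into one kernel-verified Lean document; each statement's English description precedes it below -/
import Mathlib

section
/- For any integer m ≥ 1, let ℍ_m(x;t) = 1 + Σ_{n≥1} ℍ_{n,m}(x) t^n where ℍ_{n,m}(x) = Σ_{T ∈ 𝒯_{n,m+1}} ∏_{v ∈ 𝓘(T)} (x + 1/ℍ_v^∅) and ℍ_v^∅ is the number of internal vertices of the subtree of T rooted at v, regarded as a formal power series in t with coefficients in ℚ[x]. Then ℍ_m(x;t) satisfies the differential equation ℍ'_m(x;t) = (x+1)·ℍ_m(x;t)^{m+1} + (m+1)·x·t·ℍ_m(x;t)^m·ℍ'_m(x;t), where the prime denotes the formal derivative with respect to t. -/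
open Polynomial Finset

/-- A complete `m`-ary tree: a `leaf` is an external vertex and a `node`
has exactly `m` linearly ordered subtrees. -/
inductive MTree (m : ℕ) : Type
  | leaf : MTree m
  | node : (Fin m → MTree m) → MTree m

namespace MTree

/-- The number of internal vertices of a complete `m`-ary tree. -/
def internals {m : ℕ} : MTree m → ℕ
  | leaf => 0
  | node c => 1 + ∑ i, (c i).internals

/-- The first kind of hook length of the root of `node c`: one plus the number of
internal vertices of all subtrees except the rightmost one. -/
def hook1 {m : ℕ} (c : Fin m → MTree m) : ℕ :=
  1 + ∑ i ∈ Finset.univ.filter (fun i : Fin m => (i : ℕ) + 1 < m), (c i).internals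

/-- The product of `f (𝓗_v)` over all internal vertices `v` of a complete `m`-ary
tree, where `𝓗_v` is the first kind of hook length. -/
def hookProd1 {m : ℕ} {R : Type*} [CommSemiring R] (f : ℕ → R) : MTree m → R
  | leaf => 1
  | node c => f (hook1 c) * ∏ i, hookProd1 f (c i)

/-- The number of internal vertices of the `(m+1-|S|)`-ary tree `T^S` obtained from a
complete `(m+1)`-ary tree `T` by recursively deleting, for every `r ∈ S ⊆ [m]`,
the `r`-th subtree of every remaining internal vertex (the label `r ∈ {1,…,m}`
corresponds to the child with index `r - 1`, i.e. to `Fin.castSucc` of `Fin m`). -/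
def internalsS {m : ℕ} (S : Finset (Fin m)) : MTree (m + 1) → ℕ
  | leaf => 0
  | node c => 1 + ∑ i ∈ (S.image Fin.castSucc)ᶜ, internalsS S (c i)

/-- The product of `f (ℍ_v^S)` over all internal vertices `v` of a complete
`(m+1)`-ary tree, where `ℍ_v^S` is the second kind of hook length. -/
def hookProdS {m : ℕ} {R : Type*} [CommSemiring R] (S : Finset (Fin m)) (f : ℕ → R) :
    MTree (m + 1) → R
  | leaf => 1
  | node c => f (internalsS S (node c)) * ∏ i, hookProdS S f (c i)

end MTree

open scoped PowerSeries

/-- `ℍ_{n,m}(x) = Σ_{T ∈ 𝒯_{n,m+1}} ∏_{v ∈ 𝓘(T)} (x + 1/ℍ_v^∅)`, where `ℍ_v^∅` is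
the number of internal vertices of the subtree rooted at `v` (for `n = 0` the
only tree is the single external vertex, so `ℍ_{0,m}(x) = 1`). -/
noncomputable def hookPolyEmpty (m n : ℕ) : Polynomial ℚ :=
  ∑ᶠ T ∈ {T : MTree (m + 1) | T.internals = n},
    MTree.hookProdS (∅ : Finset (Fin m)) (fun h => (X : ℚ[X]) + C ((h : ℚ)⁻¹)) T

/-- The generating function `ℍ_m(x;t) = 1 + Σ_{n≥1} ℍ_{n,m}(x) tⁿ`. -/
noncomputable def hookGFEmpty (m : ℕ) : PowerSeries (Polynomial ℚ) :=
  PowerSeries.mk (hookPolyEmpty m)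

namespace MTreeAux

open MTree

/-- `internalsS ∅` is just the number of internal vertices. -/
lemma internalsS_empty {m : ℕ} : ∀ T : MTree (m + 1), internalsS (∅ : Finset (Fin m)) T =
    T.internals
  | .leaf => rfl
  | .node c => by
    show 1 + ∑ i ∈ ((∅ : Finset (Fin m)).image Fin.castSucc)ᶜ, internalsS ∅ (c i)
        = 1 + ∑ i, (c i).internals
    rw [Finset.image_empty, Finset.compl_empty]
    exact congrArg (1 + ·) (Finset.sum_congr rfl fun i _ => internalsS_empty (c i))

/-- Trees with few internal vertices form a finite set. -/
lemma finite_lt (k n : ℕ) : {T : MTree k | T.internals < n}.Finite := by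
  induction n with
  | zero => simp
  | succ n ih =>
    have h2 : {T : MTree k | T.internals = n}.Finite := by
      have hsub : {T : MTree k | T.internals = n} ⊆
          insert MTree.leaf
            (MTree.node '' (Set.univ.pi fun _ : Fin k => {T : MTree k | T.internals < n})) := by
        intro T hT
        cases T with
        | leaf => exact Set.mem_insert _ _
        | node c =>
          refine Set.mem_insert_iff.2 (Or.inr ⟨c, fun i _ => ?_, rfl⟩)
          have hT' : 1 + ∑ j, (c j).internals = n := hT
          have hle : (c i).internals ≤ ∑ j, (c j).internals :=
            Finset.single_le_sum (f := fun j => (c j).internals)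
              (fun j _ => Nat.zero_le _) (Finset.mem_univ i)
          simp only [Set.mem_setOf_eq]
          omega
      exact Set.Finite.subset (((Set.Finite.pi fun _ => ih).image _).insert _) hsub
    have : {T : MTree k | T.internals < n + 1} =
        {T : MTree k | T.internals < n} ∪ {T : MTree k | T.internals = n} := by
      ext T; simp only [Set.mem_setOf_eq, Set.mem_union]; omega
    rw [this]; exact ih.union h2

lemma finite_eq (k n : ℕ) : {T : MTree k | T.internals = n}.Finite :=
  (finite_lt k (n + 1)).subset (by intro T hT; simpa using Nat.lt_succ_of_le (le_of_eq hT))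

lemma finite_tup (k j n : ℕ) :
    {c : Fin j → MTree k | ∑ i, (c i).internals = n}.Finite := by
  refine ((Set.Finite.pi fun _ : Fin j => finite_lt k (n + 1)).subset ?_)
  intro c hc i _
  have : (c i).internals ≤ ∑ j, (c j).internals :=
    Finset.single_le_sum (f := fun j => (c j).internals)
      (fun j _ => Nat.zero_le _) (Finset.mem_univ i)
  simp only [Set.mem_setOf_eq] at hc ⊢
  omega

/-- The finite set of trees with `n` internal vertices. -/
noncomputable def TF (k n : ℕ) : Finset (MTree k) := (finite_eq k n).toFinset

lemma mem_TF {k n : ℕ} {T : MTree k} : T ∈ TF k n ↔ T.internals = n :=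
  Set.Finite.mem_toFinset _

/-- The finite set of `j`-tuples of trees with `n` internal vertices in total. -/
noncomputable def TupF (k j n : ℕ) : Finset (Fin j → MTree k) := (finite_tup k j n).toFinset

lemma mem_TupF {k j n : ℕ} {c : Fin j → MTree k} :
    c ∈ TupF k j n ↔ ∑ i, (c i).internals = n :=
  Set.Finite.mem_toFinset _

/-- The weight of a tree. -/
noncomputable def wt {m : ℕ} (T : MTree (m + 1)) : ℚ[X] :=
  MTree.hookProdS (∅ : Finset (Fin m)) (fun h => (X : ℚ[X]) + C ((h : ℚ)⁻¹)) T

lemma hookPolyEmpty_eq (m n : ℕ) : hookPolyEmpty m n = ∑ T ∈ TF (m + 1) n, wt T := by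
  rw [hookPolyEmpty, ← (finite_eq (m + 1) n).coe_toFinset, finsum_mem_coe_finset]
  rfl

/-- The coefficient of `tⁿ` in the `j`-th power of the generating function, as a
finite sum over tuples. -/
noncomputable def coeffTup (m j n : ℕ) : ℚ[X] :=
  ∑ c ∈ TupF (m + 1) j n, ∏ i, wt (c i)

lemma coeffTup_zero (m n : ℕ) : coeffTup m 0 n = if n = 0 then 1 else 0 := by
  rcases eq_or_ne n 0 with rfl | hn
  · have h : TupF (m + 1) 0 0 = {fun i : Fin 0 => i.elim0} := by
      ext c
      simp only [mem_TupF, Finset.mem_singleton, Finset.univ_eq_empty, Finset.sum_empty,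
        true_iff]
      funext i
      exact i.elim0
    simp [coeffTup, h]
  · have h : TupF (m + 1) 0 n = ∅ := by
      ext c
      simp only [mem_TupF, Finset.univ_eq_empty, Finset.sum_empty, Finset.notMem_empty,
        iff_false]
      omega
    simp [coeffTup, h, hn]

lemma coeffTup_succ (m j n : ℕ) :
    coeffTup m (j + 1) n =
      ∑ p ∈ Finset.HasAntidiagonal.antidiagonal n, (∑ T ∈ TF (m + 1) p.1, wt T) * coeffTup m j p.2 := by
  have : ∀ p : ℕ × ℕ, (∑ T ∈ TF (m + 1) p.1, wt T) * coeffTup m j p.2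
      = ∑ q ∈ TF (m + 1) p.1 ×ˢ TupF (m + 1) j p.2, (wt q.1 * ∏ i, wt (q.2 i)) := by
    intro p
    rw [coeffTup, Finset.sum_mul_sum, Finset.sum_product]
  simp_rw [this]
  rw [Finset.sum_sigma']
  refine Finset.sum_bij' (fun (c : Fin (j+1) → MTree (m+1)) _ =>
      (⟨((c 0).internals, ∑ i, (Fin.tail c i).internals), (c 0, Fin.tail c)⟩ :
        (p : ℕ × ℕ) × (MTree (m+1) × (Fin j → MTree (m+1)))))
      (fun q _ => Fin.cons q.2.1 q.2.2) ?hi ?hj ?left ?right ?hval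
  case hi =>
    intro c hc
    rw [mem_TupF] at hc
    refine Finset.mem_sigma.2 ⟨Finset.HasAntidiagonal.mem_antidiagonal.2 ?_,
      Finset.mem_product.2 ⟨mem_TF.2 rfl, mem_TupF.2 rfl⟩⟩
    rw [← hc, Fin.sum_univ_succ]
    rfl
  case hj =>
    intro q hq
    rw [Finset.mem_sigma, Finset.HasAntidiagonal.mem_antidiagonal, Finset.mem_product, mem_TF, mem_TupF] at hq
    rw [mem_TupF]
    simp only [Fin.sum_univ_succ, Fin.cons_zero, Fin.cons_succ]
    rw [hq.2.1, hq.2.2]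
    exact hq.1
  case left =>
    intro c _
    exact Fin.cons_self_tail c
  case right =>
    intro q hq
    rcases q with ⟨⟨a, b⟩, T, d⟩
    rw [Finset.mem_sigma, Finset.HasAntidiagonal.mem_antidiagonal, Finset.mem_product, mem_TF, mem_TupF] at hq
    obtain ⟨_, h1, h2⟩ := hq
    dsimp only
    simp only [Fin.cons_zero, Fin.tail_cons]
    simp [h1, h2]
  case hval =>
    intro c _
    dsimp only
    rw [Fin.prod_univ_succ]
    rfl

lemma coeff_pow (m j n : ℕ) :
    PowerSeries.coeff n (hookGFEmpty m ^ j) = coeffTup m j n := by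
  induction j generalizing n with
  | zero =>
    rw [pow_zero, coeffTup_zero, PowerSeries.coeff_one]
  | succ j ih =>
    rw [pow_succ', PowerSeries.coeff_mul, coeffTup_succ]
    refine Finset.sum_congr rfl fun p _ => ?_
    rw [ih]
    congr 1
    rw [hookGFEmpty, PowerSeries.coeff_mk, hookPolyEmpty_eq]

/-- The children of a tree (all leaves if the tree is a leaf). -/
def kids {k : ℕ} : MTree k → (Fin k → MTree k)
  | .leaf => fun _ => MTree.leaf
  | .node c => c

lemma node_kids {k : ℕ} {T : MTree k} (h : T.internals ≠ 0) : T = MTree.node (kids T) := by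
  cases T with
  | leaf => exact absurd rfl h
  | node c => rfl

/-- The key recursion: `ℍ_{n+1,m}(x) = (x + 1/(n+1)) · [tⁿ] ℍ_m(x;t)^{m+1}`. -/
lemma hookPolyEmpty_succ (m n : ℕ) :
    hookPolyEmpty m (n + 1) =
      ((X : ℚ[X]) + C (((n : ℚ) + 1)⁻¹)) * coeffTup m (m + 1) n := by
  rw [hookPolyEmpty_eq, coeffTup, Finset.mul_sum]
  refine Finset.sum_bij' (fun T _ => kids T) (fun c _ => MTree.node c) ?_ ?_ ?_ ?_ ?_
  · intro T hT
    rw [mem_TF] at hT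
    have h0 : T.internals ≠ 0 := by omega
    have h1 : (MTree.node (kids T)).internals = n + 1 := by rw [← node_kids h0]; exact hT
    have h2 : 1 + ∑ i, (kids T i).internals = n + 1 := h1
    simp only [mem_TupF]
    omega
  · intro c hc
    rw [mem_TupF] at hc
    rw [mem_TF]
    show 1 + ∑ i, (c i).internals = n + 1
    omega
  · intro T hT
    rw [mem_TF] at hT
    exact (node_kids (by omega)).symm
  · intro c _
    rfl
  · intro T hT
    rw [mem_TF] at hT
    have h0 : T.internals ≠ 0 := by omega
    conv_lhs => rw [node_kids h0]
    show (fun h => (X : ℚ[X]) + C ((h : ℚ)⁻¹)) (internalsS ∅ (MTree.node (kids T)))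
        * ∏ i, wt (kids T i) = _
    rw [internalsS_empty, ← node_kids h0, hT]
    push_cast
    ring_nf

end MTreeAux

open MTreeAux

/-- **Differential equation for `ℍ_m(x;t)`.**  For `m ≥ 1`:
`ℍ'_m(x;t) = (x+1) ℍ_m(x;t)^{m+1} + (m+1) x t ℍ_m(x;t)^m ℍ'_m(x;t)`,
the derivative being taken with respect to `t`. -/
theorem hookGFEmpty_differential_equation (m : ℕ) (hm : 1 ≤ m) :
    d⁄dX (Polynomial ℚ) (hookGFEmpty m) =
      PowerSeries.C ((X : ℚ[X]) + 1) * hookGFEmpty m ^ (m + 1) +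
        PowerSeries.C (((m : ℚ) + 1) • (X : ℚ[X])) * PowerSeries.X *
          hookGFEmpty m ^ m * d⁄dX (Polynomial ℚ) (hookGFEmpty m) := by
  set F := hookGFEmpty m with hF
  -- rewrite the second summand using the derivative of the (m+1)-st power
  have hpowgen : ∀ k : ℕ, d⁄dX (ℚ[X]) (F ^ (k + 1)) =
      ((k : ℚ[X]⟦X⟧) + 1) * (F ^ k * d⁄dX (ℚ[X]) F) := by
    intro k
    induction k with
    | zero => simp
    | succ k ih =>
      have hd : d⁄dX (ℚ[X]) (F ^ (k + 1) * F) =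
          F ^ (k + 1) * d⁄dX (ℚ[X]) F + F * d⁄dX (ℚ[X]) (F ^ (k + 1)) := by
        have h := PowerSeries.derivativeFun_mul (F ^ (k + 1)) F
        simpa [smul_eq_mul] using h
      rw [pow_succ, hd, ih]
      push_cast
      ring
  have hpow : d⁄dX (ℚ[X]) (F ^ (m + 1)) = (m + 1) • (F ^ m * d⁄dX (ℚ[X]) F) := by
    rw [hpowgen m, nsmul_eq_mul]
    push_cast
    ring
  have hsecond :
      PowerSeries.C (((m : ℚ) + 1) • (X : ℚ[X])) * PowerSeries.X *
          F ^ m * d⁄dX (Polynomial ℚ) F =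
        PowerSeries.C (X : ℚ[X]) * (PowerSeries.X * d⁄dX (ℚ[X]) (F ^ (m + 1))) := by
    rw [hpow, nsmul_eq_mul]
    have h1 : ((m : ℚ) + 1) • (X : ℚ[X]) = ((m : ℚ[X]) + 1) * X := by
      rw [Polynomial.smul_eq_C_mul, map_add, map_one, Polynomial.C_eq_natCast]
    rw [h1, map_mul, map_add, map_one, map_natCast]
    push_cast
    ring
  rw [hsecond]
  refine PowerSeries.ext fun n => ?_
  rw [PowerSeries.coeff_derivative, map_add, PowerSeries.coeff_C_mul, PowerSeries.coeff_C_mul]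
  have hcoeffF : ∀ k, PowerSeries.coeff k (hookGFEmpty m) = hookPolyEmpty m k :=
    fun k => PowerSeries.coeff_mk k _
  rw [hF, hcoeffF, hookPolyEmpty_succ, coeff_pow]
  have hX : PowerSeries.coeff n (PowerSeries.X * d⁄dX (ℚ[X]) (F ^ (m + 1)))
      = (n : ℚ[X]) * coeffTup m (m + 1) n := by
    cases n with
    | zero => simp
    | succ k =>
      rw [PowerSeries.coeff_succ_X_mul, PowerSeries.coeff_derivative, coeff_pow]
      push_cast
      ring
  rw [hX]
  have hinv : (C (((n : ℚ) + 1)⁻¹) : ℚ[X]) * ((n : ℚ[X]) + 1) = 1 := by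
    have : ((n : ℚ[X]) + 1) = C ((n : ℚ) + 1) := by
      rw [map_add, map_one, Polynomial.C_eq_natCast]
    rw [this, ← map_mul, inv_mul_cancel₀ (by positivity), map_one]
  linear_combination hinv * coeffTup m (m + 1) n
end

section
/- For any integer m ≥ 1, subset S ⊆ [m] = {1,2,…,m} with s = |S|, let {}_Sℍ_m(x;t) = 1 + Σ_{n≥1} ({}_Sℍ_{n,m}(x)) t^n where {}_Sℍ_{n,m}(x) = Σ_{T ∈ 𝒯_{n,m+1}} ∏_{v ∈ 𝓘(T)} (x + 1/ℍ_v^S), and let {}_∅ℍ_{m−s}(x;t) be the analogous generating function for complete (m−s+1)-ary trees with S = ∅. Then, as formal power series in t over ℚ[x], {}_Sℍ_m(x;t) = {}_∅ℍ_{m−s}(x; t·({}_Sℍ_m(x;t))^s); equivalently, {}_Sℍ_m(x;t) = 1 + Σ_{n≥1} ({}_∅ℍ_{n,m−s}(x)) · t^n · ({}_Sℍ_m(x;t))^{ns}. -/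
open Polynomial Finset

/-- `{}_Sℍ_{n,m}(x) = Σ_{T ∈ 𝒯_{n,m+1}} ∏_{v ∈ 𝓘(T)} (x + 1/ℍ_v^S)` (for `n = 0`
the only tree is the single external vertex, so `{}_Sℍ_{0,m}(x) = 1`). -/
noncomputable def hookPolyS (m : ℕ) (S : Finset (Fin m)) (n : ℕ) : Polynomial ℚ :=
  ∑ᶠ T ∈ {T : MTree (m + 1) | T.internals = n},
    MTree.hookProdS S (fun h => (X : ℚ[X]) + C ((h : ℚ)⁻¹)) T

/-- The generating function `{}_Sℍ_m(x;t) = 1 + Σ_{n≥1} ({}_Sℍ_{n,m}(x)) tⁿ`. -/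
noncomputable def hookGFS (m : ℕ) (S : Finset (Fin m)) : PowerSeries (Polynomial ℚ) :=
  PowerSeries.mk (hookPolyS m S)

namespace HookProof

open MTree

noncomputable instance {K : ℕ} : DecidableEq (MTree K) := Classical.decEq _

lemma internals_eq_zero_iff {K : ℕ} (T : MTree K) : T.internals = 0 ↔ T = MTree.leaf := by
  cases T with
  | leaf => simp [MTree.internals]
  | node c => simp [MTree.internals]

lemma internalsS_eq_zero_iff {m : ℕ} (S : Finset (Fin m)) (T : MTree (m + 1)) :
    MTree.internalsS S T = 0 ↔ T = MTree.leaf := by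
  cases T with
  | leaf => simp [MTree.internalsS]
  | node c => simp [MTree.internalsS]

lemma internalsS_le_internals {m : ℕ} (S : Finset (Fin m)) :
    ∀ T : MTree (m + 1), MTree.internalsS S T ≤ T.internals
  | .leaf => le_rfl
  | .node c => by
    simp only [MTree.internalsS, MTree.internals]
    refine Nat.add_le_add_left ?_ 1
    calc ∑ i ∈ (S.image Fin.castSucc)ᶜ, MTree.internalsS S (c i)
        ≤ ∑ i ∈ (S.image Fin.castSucc)ᶜ, (c i).internals :=
          Finset.sum_le_sum fun i _ => internalsS_le_internals S (c i)
      _ ≤ ∑ i, (c i).internals := Finset.sum_le_sum_of_subset (Finset.subset_univ _)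

lemma internalsS_empty {m' : ℕ} :
    ∀ T : MTree (m' + 1), MTree.internalsS (∅ : Finset (Fin m')) T = T.internals
  | .leaf => rfl
  | .node c => by
    simp only [MTree.internalsS, MTree.internals, Finset.image_empty, Finset.compl_empty]
    exact congrArg (1 + ·) (Finset.sum_congr rfl fun i _ => internalsS_empty (c i))

lemma finite_internals_le (K n : ℕ) : {T : MTree K | T.internals ≤ n}.Finite := by
  induction n with
  | zero =>
    apply Set.Finite.subset (Set.finite_singleton MTree.leaf)
    intro T hT
    simp only [Set.mem_setOf_eq, Nat.le_zero] at hT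
    simpa using (internals_eq_zero_iff T).mp hT
  | succ n ih =>
    apply Set.Finite.subset (Set.Finite.insert MTree.leaf
      (Set.Finite.image MTree.node (Set.Finite.pi (fun _ : Fin K => ih))))
    intro T hT
    cases T with
    | leaf => exact Set.mem_insert _ _
    | node c =>
      refine Set.mem_insert_of_mem _ ⟨c, fun i _ => ?_, rfl⟩
      simp only [Set.mem_setOf_eq, MTree.internals] at hT ⊢
      have : (c i).internals ≤ ∑ j, (c j).internals :=
        Finset.single_le_sum (f := fun j => (c j).internals) (fun j _ => Nat.zero_le _) (Finset.mem_univ i)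
      omega

lemma finite_internals_eq (K n : ℕ) : {T : MTree K | T.internals = n}.Finite :=
  (finite_internals_le K n).subset fun _ hT => le_of_eq hT

/-- The finset of trees with exactly `n` internal vertices. -/
noncomputable def TE (K n : ℕ) : Finset (MTree K) := (finite_internals_eq K n).toFinset

/-- The finset of trees with at most `n` internal vertices. -/
noncomputable def TLE (K n : ℕ) : Finset (MTree K) := (finite_internals_le K n).toFinset

@[simp] lemma mem_TE {K n : ℕ} {T : MTree K} : T ∈ TE K n ↔ T.internals = n :=
  Set.Finite.mem_toFinset _

@[simp] lemma mem_TLE {K n : ℕ} {T : MTree K} : T ∈ TLE K n ↔ T.internals ≤ n :=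
  Set.Finite.mem_toFinset _

/-- The weight function. -/
noncomputable def f : ℕ → ℚ[X] := fun h => X + C ((h : ℚ)⁻¹)

lemma hookPolyS_eq_sum (m : ℕ) (S : Finset (Fin m)) (n : ℕ) :
    hookPolyS m S n = ∑ T ∈ TE (m + 1) n, MTree.hookProdS S f T := by
  rw [hookPolyS, ← (finite_internals_eq (m + 1) n).coe_toFinset, finsum_mem_coe_finset]
  rfl

end HookProof
namespace HookProof

open MTree

variable (m : ℕ) (S : Finset (Fin m))

/-- The set of deleted child indices, inside `Fin (m+1)`. -/
def S' : Finset (Fin (m + 1)) := S.image Fin.castSucc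

lemma card_S' : (S' m S).card = S.card :=
  Finset.card_image_of_injective _ (Fin.castSucc_injective m)

lemma card_compl_S' : (S' m S)ᶜ.card = (m - S.card) + 1 := by
  have h1 : S.card ≤ m := by
    simpa using Finset.card_le_univ S
  rw [Finset.card_compl, card_S']
  simp only [Fintype.card_fin]
  omega

/-- The weight of a tree. -/
noncomputable def w : MTree (m + 1) → ℚ[X] := MTree.hookProdS S f

@[simp] lemma w_leaf : w m S MTree.leaf = 1 := rfl

lemma w_node (c : Fin (m + 1) → MTree (m + 1)) :
    w m S (MTree.node c) =
      f (1 + ∑ i ∈ (S' m S)ᶜ, MTree.internalsS S (c i)) * ∏ i, w m S (c i) := rfl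

/-- Trees with `n` internal vertices and `internalsS = N`. -/
noncomputable def TA (n N : ℕ) : Finset (MTree (m + 1)) :=
  (TE (m + 1) n).filter (fun T => MTree.internalsS S T = N)

/-- The refined hook polynomial. -/
noncomputable def A (n N : ℕ) : ℚ[X] := ∑ T ∈ TA m S n N, w m S T

/-- The refined generating function. -/
noncomputable def B (N : ℕ) : PowerSeries ℚ[X] := PowerSeries.mk fun n => A m S n N

@[simp] lemma coeff_B (n N : ℕ) : PowerSeries.coeff (R := ℚ[X]) n (B m S N) = A m S n N :=
  PowerSeries.coeff_mk _ _

/-- Tuples of subtrees realizing given statistics. -/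
noncomputable def CC (n N : ℕ) : Finset (Fin (m + 1) → MTree (m + 1)) :=
  (Fintype.piFinset fun _ : Fin (m + 1) => TLE (m + 1) n).filter
    (fun c => (∑ i, (c i).internals) = n ∧ (∑ i ∈ (S' m S)ᶜ, MTree.internalsS S (c i)) = N)

lemma TA_succ (n N : ℕ) : TA m S (n + 1) (N + 1) = (CC m S n N).image MTree.node := by
  ext T
  cases T with
  | leaf =>
    simp only [TA, Finset.mem_filter, mem_TE, Finset.mem_image]
    constructor
    · rintro ⟨h, -⟩; simp [MTree.internals] at h
    · rintro ⟨c, -, h⟩; exact absurd h (by simp)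
  | node c =>
    simp only [TA, CC, Finset.mem_filter, mem_TE, Finset.mem_image, Fintype.mem_piFinset, mem_TLE]
    simp only [Finset.mem_filter, mem_TE, Finset.mem_image, MTree.internals,
      MTree.internalsS, CC, Fintype.mem_piFinset, mem_TLE, S']
    constructor
    · rintro ⟨h1, h2⟩
      refine ⟨c, ⟨fun i => ?_, by omega, by omega⟩, rfl⟩
      have : (c i).internals ≤ ∑ j, (c j).internals :=
        Finset.single_le_sum (f := fun j => (c j).internals) (fun j _ => Nat.zero_le _)
          (Finset.mem_univ i)
      omega
    · rintro ⟨c', ⟨-, h1, h2⟩, h⟩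
      obtain rfl : c' = c := by
        injection h
      constructor <;> omega

lemma A_rec (n N : ℕ) :
    A m S (n + 1) (N + 1) = f (N + 1) * ∑ c ∈ CC m S n N, ∏ i, w m S (c i) := by
  rw [A, TA_succ, Finset.sum_image (fun c _ c' _ h => by injection h), Finset.mul_sum]
  refine Finset.sum_congr rfl fun c hc => ?_
  rw [w_node]
  simp only [CC, Finset.mem_filter] at hc
  rw [hc.2.2, Nat.add_comm 1 N]

end HookProof
namespace HookProof

open MTree Finsupp

variable (m : ℕ) (S : Finset (Fin m))

lemma core (n N : ℕ) :
    ∑ c ∈ CC m S n N, ∏ i, w m S (c i)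
      = ∑ p ∈ (Finset.finsuppAntidiag ((S' m S)ᶜ) N) ×ˢ
            (Finset.finsuppAntidiag (Finset.univ : Finset (Fin (m + 1))) n),
          (∏ i ∈ (S' m S)ᶜ, A m S (p.2 i) (p.1 i)) * ∏ i ∈ S' m S, hookPolyS m S (p.2 i) := by
  classical
  set key : (Fin (m + 1) → MTree (m + 1)) → ((Fin (m + 1) →₀ ℕ) × (Fin (m + 1) →₀ ℕ)) :=
    fun c => (equivFunOnFinite.symm (fun i => if i ∈ (S' m S)ᶜ then internalsS S (c i) else 0),
              equivFunOnFinite.symm (fun i => (c i).internals)) with hkey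
  have happ : ∀ (g : Fin (m + 1) → ℕ) (i : Fin (m + 1)), (equivFunOnFinite.symm g) i = g i :=
    fun g i => rfl
  have hmaps : ∀ c ∈ CC m S n N, key c ∈ ((Finset.finsuppAntidiag ((S' m S)ᶜ) N) ×ˢ
      (Finset.finsuppAntidiag (Finset.univ : Finset (Fin (m + 1))) n)) := by
    intro c hc
    simp only [CC, Finset.mem_filter] at hc
    obtain ⟨-, hsum, hsum'⟩ := hc
    simp only [Finset.mem_product, Finset.mem_finsuppAntidiag, hkey]
    refine ⟨⟨?_, ?_⟩, ?_, Finset.subset_univ _⟩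
    · rw [Finset.sum_congr rfl (fun i hi => by rw [happ, if_pos hi])]
      exact hsum'
    · intro i hi
      simp only [Finsupp.mem_support_iff, happ] at hi
      by_contra hmem
      exact hi (if_neg hmem)
    · rw [Finset.sum_congr rfl (fun i _ => happ _ i)]
      exact hsum
  rw [← Finset.sum_fiberwise_of_maps_to hmaps (fun c => ∏ i, w m S (c i))]
  refine Finset.sum_congr rfl fun p hp => ?_
  simp only [Finset.mem_product, Finset.mem_finsuppAntidiag] at hp
  obtain ⟨⟨hp1sum, hp1supp⟩, hp2sum, -⟩ := hp
  have hfib : (CC m S n N).filter (fun c => key c = p)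
      = Fintype.piFinset (fun i => if i ∈ S' m S then TE (m + 1) (p.2 i)
          else TA m S (p.2 i) (p.1 i)) := by
    ext c
    simp only [Finset.mem_filter, CC, Fintype.mem_piFinset, mem_TLE, Prod.ext_iff, hkey]
    constructor
    · rintro ⟨⟨-, hsum, hsum'⟩, h1, h2⟩
      have h2' : ∀ i, (c i).internals = p.2 i := fun i => by rw [← h2, happ]
      have h1' : ∀ i, (if i ∈ (S' m S)ᶜ then internalsS S (c i) else 0) = p.1 i :=
        fun i => by rw [← h1, happ]
      intro i
      by_cases hi : i ∈ S' m S
      · rw [if_pos hi]; exact mem_TE.mpr (h2' i)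
      · rw [if_neg hi]
        simp only [TA, Finset.mem_filter, mem_TE]
        have := h1' i
        rw [if_pos (Finset.mem_compl.mpr hi)] at this
        exact ⟨h2' i, this⟩
    · intro h
      have h2' : ∀ i, (c i).internals = p.2 i := by
        intro i
        have hi' := h i
        by_cases hi : i ∈ S' m S
        · rw [if_pos hi] at hi'; exact mem_TE.mp hi'
        · rw [if_neg hi] at hi'
          simp only [TA, Finset.mem_filter, mem_TE] at hi'
          exact hi'.1
      have h1' : ∀ i ∈ (S' m S)ᶜ, internalsS S (c i) = p.1 i := by
        intro i hi
        have hi' := h i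
        rw [if_neg (Finset.mem_compl.mp hi)] at hi'
        simp only [TA, Finset.mem_filter, mem_TE] at hi'
        exact hi'.2
      have hle : ∀ i, (c i).internals ≤ n := by
        intro i
        rw [h2' i, ← hp2sum]
        exact Finset.single_le_sum (f := fun j => (p.2 : Fin (m + 1) → ℕ) j)
          (fun j _ => Nat.zero_le _) (Finset.mem_univ i)
      refine ⟨⟨fun i => hle i, ?_, ?_⟩, ?_, ?_⟩
      · rw [Finset.sum_congr rfl (fun i _ => h2' i)]; exact hp2sum
      · rw [Finset.sum_congr rfl (fun i hi => h1' i hi)]; exact hp1sum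
      · rw [Equiv.symm_apply_eq]
        funext i
        show (if i ∈ (S' m S)ᶜ then internalsS S (c i) else 0) = p.1 i
        by_cases hi : i ∈ (S' m S)ᶜ
        · rw [if_pos hi]; exact h1' i hi
        · rw [if_neg hi]
          exact (Finsupp.notMem_support_iff.mp fun hs => hi (hp1supp hs)).symm
      · rw [Equiv.symm_apply_eq]
        funext i
        exact h2' i
  rw [hfib, ← Finset.prod_univ_sum]
  rw [← Finset.prod_mul_prod_compl (S' m S), mul_comm]
  congr 1
  · refine Finset.prod_congr rfl fun i hi => ?_
    rw [if_neg (Finset.mem_compl.mp hi)]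
    rfl
  · refine Finset.prod_congr rfl fun i hi => ?_
    rw [if_pos hi, hookPolyS_eq_sum]
    rfl

end HookProof
namespace HookProof

open MTree Finsupp

variable (m : ℕ) (S : Finset (Fin m))

lemma A_zero_succ (N : ℕ) : A m S 0 (N + 1) = 0 := by
  have h : TA m S 0 (N + 1) = ∅ := by
    ext T
    simp only [TA, Finset.mem_filter, mem_TE, Finset.notMem_empty, iff_false, not_and]
    intro h0
    rw [(internals_eq_zero_iff T).mp h0]
    simp [MTree.internalsS]
  rw [A, h, Finset.sum_empty]

lemma B_rec (N : ℕ) :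
    B m S (N + 1) = (PowerSeries.C (R := ℚ[X]) (f (N + 1)) *
      ((∑ ν ∈ Finset.finsuppAntidiag ((S' m S)ᶜ) N, ∏ i ∈ (S' m S)ᶜ, B m S (ν i)) *
        hookGFS m S ^ S.card)) * PowerSeries.X := by
  ext1 n
  cases n with
  | zero => rw [PowerSeries.coeff_zero_mul_X, coeff_B]; exact A_zero_succ m S N
  | succ n =>
    rw [PowerSeries.coeff_succ_mul_X, PowerSeries.coeff_C_mul, coeff_B, A_rec, core]
    refine congrArg (fun z => f (N + 1) * z) ?_
    rw [Finset.sum_product, Finset.sum_mul, map_sum]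
    refine Finset.sum_congr rfl fun ν hν => ?_
    have h1 : ∏ i ∈ (S' m S)ᶜ, (if i ∈ S' m S then hookGFS m S else B m S (ν i))
        = ∏ i ∈ (S' m S)ᶜ, B m S (ν i) :=
      Finset.prod_congr rfl fun i hi => if_neg (Finset.mem_compl.mp hi)
    have h2 : ∏ i ∈ S' m S, (if i ∈ S' m S then hookGFS m S else B m S (ν i))
        = hookGFS m S ^ S.card := by
      rw [Finset.prod_congr rfl (fun i hi => if_pos hi), Finset.prod_const, card_S']
    have hΦ : (∏ i ∈ (S' m S)ᶜ, B m S (ν i)) * hookGFS m S ^ S.card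
        = ∏ i : Fin (m + 1), (if i ∈ S' m S then hookGFS m S else B m S (ν i)) := by
      rw [← Finset.prod_mul_prod_compl (S' m S)
        (fun i => if i ∈ S' m S then hookGFS m S else B m S (ν i)), h1, h2, mul_comm]
    rw [hΦ, PowerSeries.coeff_prod]
    refine Finset.sum_congr rfl fun l hl => ?_
    have e1 : ∏ i ∈ (S' m S)ᶜ, PowerSeries.coeff (R := ℚ[X]) (l i)
          (if i ∈ S' m S then hookGFS m S else B m S (ν i))
        = ∏ i ∈ (S' m S)ᶜ, A m S (l i) (ν i) :=
      Finset.prod_congr rfl fun i hi => by rw [if_neg (Finset.mem_compl.mp hi), coeff_B]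
    have e2 : ∏ i ∈ S' m S, PowerSeries.coeff (R := ℚ[X]) (l i)
          (if i ∈ S' m S then hookGFS m S else B m S (ν i))
        = ∏ i ∈ S' m S, hookPolyS m S (l i) :=
      Finset.prod_congr rfl fun i hi => by rw [if_pos hi]; exact PowerSeries.coeff_mk _ _
    rw [← Finset.prod_mul_prod_compl (S' m S)
      (fun i => PowerSeries.coeff (R := ℚ[X]) (l i) (if i ∈ S' m S then hookGFS m S else B m S (ν i))),
      e1, e2]
    exact mul_comm _ _

end HookProof
namespace HookProof

open MTree Finsupp

lemma S'_empty (m' : ℕ) : S' m' (∅ : Finset (Fin m')) = ∅ := by simp [S']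

lemma A_diag (m' n : ℕ) : A m' (∅ : Finset (Fin m')) n n = hookPolyS m' ∅ n := by
  rw [A, hookPolyS_eq_sum, TA, Finset.filter_true_of_mem]
  · rfl
  · intro T hT
    rw [internalsS_empty]
    exact mem_TE.mp hT

lemma A_offdiag (m' : ℕ) {a b : ℕ} (h : a ≠ b) : A m' (∅ : Finset (Fin m')) a b = 0 := by
  have hemp : TA m' (∅ : Finset (Fin m')) a b = ∅ := by
    ext T
    simp only [TA, Finset.mem_filter, mem_TE, Finset.notMem_empty, iff_false, not_and]
    intro h1
    rw [internalsS_empty, h1]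
    exact h
  rw [A, hemp, Finset.sum_empty]

lemma g_rec (m' N : ℕ) :
    hookPolyS m' (∅ : Finset (Fin m')) (N + 1)
      = f (N + 1) * ∑ μ ∈ Finset.finsuppAntidiag (Finset.univ : Finset (Fin (m' + 1))) N,
          ∏ j, hookPolyS m' (∅ : Finset (Fin m')) (μ j) := by
  rw [← A_diag, A_rec, core]
  refine congrArg (fun z => f (N + 1) * z) ?_
  simp only [S'_empty, Finset.compl_empty, Finset.prod_empty, mul_one]
  rw [Finset.sum_product]
  refine Finset.sum_congr rfl fun ν hν => ?_
  rw [Finset.sum_eq_single ν]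
  · exact Finset.prod_congr rfl fun i _ => A_diag m' (ν i)
  · intro l hl hlne
    have hex : ∃ i, l i ≠ ν i := by
      by_contra hno
      push_neg at hno
      exact hlne (Finsupp.ext hno)
    obtain ⟨i, hi⟩ := hex
    exact Finset.prod_eq_zero (Finset.mem_univ i) (A_offdiag m' hi)
  · intro hν'
    exact absurd hν hν'

lemma map_univ_emb (m : ℕ) (S : Finset (Fin m)) :
    Finset.univ.map ⟨fun j => ((((S' m S)ᶜ).orderIsoOfFin (card_compl_S' m S)) j : Fin (m + 1)),
        fun a b h => (((S' m S)ᶜ).orderIsoOfFin (card_compl_S' m S)).injective (Subtype.ext h)⟩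
      = (S' m S)ᶜ := by
  ext i
  simp only [Finset.mem_map, Finset.mem_univ, true_and, Function.Embedding.coeFn_mk]
  constructor
  · rintro ⟨j, rfl⟩
    exact ((((S' m S)ᶜ).orderIsoOfFin (card_compl_S' m S)) j).2
  · intro hi
    exact ⟨(((S' m S)ᶜ).orderIsoOfFin (card_compl_S' m S)).symm ⟨i, hi⟩,
      congrArg Subtype.val ((((S' m S)ᶜ).orderIsoOfFin (card_compl_S' m S)).apply_symm_apply ⟨i, hi⟩)⟩

set_option maxHeartbeats 1000000 in
lemma reindex (m : ℕ) (S : Finset (Fin m)) (N : ℕ) (F : ℕ → ℚ[X]) :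
    ∑ ν ∈ Finset.finsuppAntidiag ((S' m S)ᶜ) N, ∏ i ∈ (S' m S)ᶜ, F (ν i)
      = ∑ μ ∈ Finset.finsuppAntidiag (Finset.univ : Finset (Fin (m - S.card + 1))) N,
          ∏ j, F (μ j) := by
  classical
  set e := (((S' m S)ᶜ).orderIsoOfFin (card_compl_S' m S)) with he
  set embF : Fin (m - S.card + 1) ↪ Fin (m + 1) :=
    ⟨fun j => (e j : Fin (m + 1)), fun a b h => e.injective (Subtype.ext h)⟩ with hembF
  have hmap : Finset.univ.map embF = (S' m S)ᶜ := map_univ_emb m S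
  refine Finset.sum_bij' (fun ν _ => equivFunOnFinite.symm fun j => ν (embF j))
    (fun μ _ => Finsupp.embDomain embF μ) ?_ ?_ ?_ ?_ ?_
  · intro ν hν
    rw [Finset.mem_finsuppAntidiag] at hν ⊢
    refine ⟨?_, Finset.subset_univ _⟩
    have : ∀ j : Fin (m - S.card + 1),
        (equivFunOnFinite.symm fun j => ν (embF j)) j = ν (embF j) := fun _ => rfl
    rw [Finset.sum_congr rfl fun j _ => this j, ← Finset.sum_map, hmap]
    exact hν.1
  · intro μ hμ
    rw [Finset.mem_finsuppAntidiag] at hμ ⊢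
    constructor
    · rw [← hmap, Finset.sum_map]
      simp only [Finsupp.embDomain_apply_self]
      exact hμ.1
    · rw [Finsupp.support_embDomain, ← hmap]
      exact Finset.map_subset_map.mpr (Finset.subset_univ _)
  · intro ν hν
    rw [Finset.mem_finsuppAntidiag] at hν
    ext i
    by_cases hi : i ∈ (S' m S)ᶜ
    · obtain ⟨j, rfl⟩ : ∃ j, embF j = i := ⟨e.symm ⟨i, hi⟩, congrArg Subtype.val (e.apply_symm_apply ⟨i, hi⟩)⟩
      rw [Finsupp.embDomain_apply_self]
      rfl
    · have h1 : (Finsupp.embDomain embF (equivFunOnFinite.symm fun j => ν (embF j))) i = 0 := by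
        apply Finsupp.notMem_support_iff.mp
        rw [Finsupp.support_embDomain]
        intro hmem
        obtain ⟨j, -, rfl⟩ := Finset.mem_map.mp hmem
        exact hi (hmap ▸ Finset.mem_map_of_mem embF (Finset.mem_univ j))
      have h2 : ν i = 0 := Finsupp.notMem_support_iff.mp fun hs => hi (hν.2 hs)
      rw [h1, h2]
  · intro μ hμ
    ext j
    show (Finsupp.embDomain embF μ) (embF j) = μ j
    rw [Finsupp.embDomain_apply_self]
  · intro ν hν
    conv_lhs => rw [← hmap, Finset.prod_map]
    exact Finset.prod_congr rfl fun j _ => rfl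

end HookProof
namespace HookProof

open MTree Finsupp

lemma TE_zero (K : ℕ) : TE (K + 1) 0 = {MTree.leaf} := by
  ext T
  simp only [mem_TE, Finset.mem_singleton]
  exact internals_eq_zero_iff T

lemma g_zero (m' : ℕ) : hookPolyS m' (∅ : Finset (Fin m')) 0 = 1 := by
  rw [hookPolyS_eq_sum, TE_zero, Finset.sum_singleton]
  rfl

lemma B_zero (m : ℕ) (S : Finset (Fin m)) : B m S 0 = 1 := by
  ext1 n
  rw [coeff_B]
  cases n with
  | zero =>
    have h : TA m S 0 0 = {MTree.leaf} := by
      ext T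
      simp only [TA, Finset.mem_filter, mem_TE, Finset.mem_singleton]
      constructor
      · rintro ⟨h1, -⟩
        exact (internals_eq_zero_iff T).mp h1
      · rintro rfl
        exact ⟨rfl, rfl⟩
    rw [A, h, Finset.sum_singleton, w_leaf]
    simp
  | succ n =>
    have h : TA m S (n + 1) 0 = ∅ := by
      ext T
      simp only [TA, Finset.mem_filter, mem_TE, Finset.notMem_empty, iff_false, not_and]
      intro h1 h2
      rw [(internalsS_eq_zero_iff S T).mp h2] at h1
      simp [MTree.internals] at h1
    rw [A, h, Finset.sum_empty]
    simp [PowerSeries.coeff_one]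

lemma B_closed (m : ℕ) (S : Finset (Fin m)) (N : ℕ) :
    B m S N = PowerSeries.C (R := ℚ[X]) (hookPolyS (m - S.card) (∅ : Finset (Fin (m - S.card))) N) *
      PowerSeries.X ^ N * hookGFS m S ^ (N * S.card) := by
  induction N using Nat.strong_induction_on with
  | _ N IH =>
    match N, IH with
    | 0, _ =>
      rw [B_zero, g_zero]
      simp
    | N + 1, IH =>
      rw [B_rec]
      have hν : ∀ ν ∈ Finset.finsuppAntidiag ((S' m S)ᶜ) N,
          ∏ i ∈ (S' m S)ᶜ, B m S (ν i)
            = PowerSeries.C (R := ℚ[X])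
                (∏ i ∈ (S' m S)ᶜ, hookPolyS (m - S.card) (∅ : Finset (Fin (m - S.card))) (ν i)) *
              PowerSeries.X ^ N * hookGFS m S ^ (N * S.card) := by
        intro ν hν
        rw [Finset.mem_finsuppAntidiag] at hν
        have hle : ∀ i ∈ (S' m S)ᶜ, ν i ≤ N := fun i hi => by
          rw [← hν.1]
          exact Finset.single_le_sum (f := fun j => (ν : Fin (m + 1) → ℕ) j)
            (fun j _ => Nat.zero_le _) hi
        rw [Finset.prod_congr rfl (fun i hi => IH (ν i) (Nat.lt_succ_of_le (hle i hi))),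
          Finset.prod_mul_distrib, Finset.prod_mul_distrib, ← map_prod,
          Finset.prod_pow_eq_pow_sum, Finset.prod_pow_eq_pow_sum, ← Finset.sum_mul, hν.1]
      rw [Finset.sum_congr rfl hν, ← Finset.sum_mul, ← Finset.sum_mul, ← map_sum,
        reindex m S N, g_rec (m - S.card) N, map_mul]
      have hexp : (N + 1) * S.card = N * S.card + S.card := by ring
      rw [hexp, pow_add, pow_succ]
      ring

end HookProof

/-- **Functional equation for `{}_Sℍ_m(x;t)`.**  For `m ≥ 1` and `S ⊆ [m]` with
`s = |S|`, one has `{}_Sℍ_m(x;t) = {}_∅ℍ_{m-s}(x; t ({}_Sℍ_m(x;t))^s)`,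
equivalently `{}_Sℍ_m(x;t) = 1 + Σ_{n≥1} ({}_∅ℍ_{n,m-s}(x)) tⁿ ({}_Sℍ_m(x;t))^{ns}`.
Since `tⁿ ({}_Sℍ_m)^{ns}` has order at least `n`, this is expressed
coefficientwise: the coefficient of `tᵏ` in `{}_Sℍ_m(x;t)` equals
`Σ_{n≤k} ({}_∅ℍ_{n,m-s}(x)) ⬝ [t^{k-n}] (({}_Sℍ_m(x;t))^{ns})`. -/
theorem hookGFS_functional_equation (m : ℕ) (hm : 1 ≤ m) (S : Finset (Fin m)) :
    ∀ k : ℕ,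
      PowerSeries.coeff (R := Polynomial ℚ) k (hookGFS m S) =
        ∑ n ∈ Finset.range (k + 1),
          hookPolyS (m - S.card) (∅ : Finset (Fin (m - S.card))) n *
            PowerSeries.coeff (R := Polynomial ℚ) (k - n)
              (hookGFS m S ^ (n * S.card)) := by
  intro k
  open HookProof in
  have hcoe : PowerSeries.coeff (R := ℚ[X]) k (hookGFS m S) = hookPolyS m S k := by
    rw [hookGFS, PowerSeries.coeff_mk]
  rw [hcoe]
  have hfib : ∑ N ∈ Finset.range (k + 1), HookProof.A m S k N = hookPolyS m S k := by
    rw [HookProof.hookPolyS_eq_sum]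
    rw [← Finset.sum_fiberwise_of_maps_to (g := fun T => MTree.internalsS S T)
      (t := Finset.range (k + 1)) ?_ (MTree.hookProdS S HookProof.f)]
    · exact Finset.sum_congr rfl fun N _ => rfl
    · intro T hT
      rw [Finset.mem_range]
      exact Nat.lt_succ_of_le ((HookProof.internalsS_le_internals S T).trans_eq
        (HookProof.mem_TE.mp hT))
  rw [← hfib]
  refine Finset.sum_congr rfl fun N hN => ?_
  have hNk : N ≤ k := Nat.lt_succ_iff.mp (Finset.mem_range.mp hN)
  calc HookProof.A m S k N = PowerSeries.coeff (R := ℚ[X]) k (HookProof.B m S N) :=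
        (HookProof.coeff_B m S k N).symm
    _ = _ := by
        rw [HookProof.B_closed, mul_assoc, PowerSeries.coeff_C_mul,
          PowerSeries.coeff_X_pow_mul', if_pos hNk]
end

section
/- For any integer m ≥ 1, subset S ⊆ [m] = {1,2,…,m} with s = |S|, let {}_Sℍ_m(x;t) = 1 + Σ_{n≥1} ({}_Sℍ_{n,m}(x)) t^n where {}_Sℍ_{n,m}(x) = Σ_{T ∈ 𝒯_{n,m+1}} ∏_{v ∈ 𝓘(T)} (x + 1/ℍ_v^S), regarded as a formal power series in t with coefficients in ℚ[x]. Then {}_Sℍ_m(x;t) satisfies the differential equation {}_Sℍ'_m(x;t) = (x+1)·({}_Sℍ_m(x;t))^{m+1} + ((m−s+1)x + s(x+1))·t·({}_Sℍ_m(x;t))^m·{}_Sℍ'_m(x;t), where the prime denotes the formal derivative with respect to t. -/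
set_option maxHeartbeats 1000000


open Polynomial Finset

open scoped PowerSeries

namespace MTree

variable {k : ℕ}

def decEq : (a b : MTree k) → Decidable (a = b)
  | leaf, leaf => isTrue rfl
  | leaf, node _ => isFalse (fun h => by cases h)
  | node _, leaf => isFalse (fun h => by cases h)
  | node c, node d =>
    have : ∀ i, Decidable (c i = d i) := fun i => decEq (c i) (d i)
    decidable_of_iff (∀ i, c i = d i) (by
      constructor
      · intro h; exact congrArg node (funext h)
      · intro h i; cases h; rfl)

instance : DecidableEq (MTree k) := decEq

lemma internals_eq_zero {T : MTree k} : T.internals = 0 ↔ T = leaf := by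
  cases T with
  | leaf => simp [internals]
  | node c => simp [internals]

def treesD : ℕ → Finset (MTree k)
  | 0 => {leaf}
  | d+1 => insert leaf ((Fintype.piFinset fun _ : Fin k => treesD d).image node)

lemma leaf_mem_treesD (d : ℕ) : (leaf : MTree k) ∈ treesD d := by
  cases d <;> simp [treesD]

lemma mem_treesD : ∀ (T : MTree k) (d : ℕ), T.internals ≤ d → T ∈ treesD d := by
  intro T
  induction T with
  | leaf => intro d _; exact leaf_mem_treesD d
  | node c ih =>
    intro d hd
    have h1 : 1 ≤ d := le_trans (by simp [internals]) hd
    obtain ⟨e, rfl⟩ : ∃ e, d = e + 1 := ⟨d - 1, by omega⟩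
    simp only [treesD, mem_insert, mem_image, Fintype.mem_piFinset]
    refine Or.inr ⟨c, fun i => ih i e ?_, rfl⟩
    have : (c i).internals ≤ ∑ j, (c j).internals :=
      Finset.single_le_sum (f := fun j => (c j).internals) (fun j _ => Nat.zero_le _) (mem_univ i)
    simp only [internals] at hd; omega

def treesN (n : ℕ) : Finset (MTree k) := (treesD n).filter (fun T => T.internals = n)

lemma mem_treesN {T : MTree k} {n : ℕ} : T ∈ treesN n ↔ T.internals = n := by
  simp only [treesN, mem_filter, and_iff_right_iff_imp]
  intro h; exact mem_treesD T n h.le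

lemma treesN_zero : (treesN 0 : Finset (MTree k)) = {leaf} := by
  ext T; simp [mem_treesN, internals_eq_zero]

end MTree

namespace MTree

variable {m : ℕ} (S : Finset (Fin m))

/-- the weight `x + 1/ℍ_v^S` product over all internal vertices. -/
noncomputable def wt (T : MTree (m + 1)) : ℚ[X] :=
  hookProdS S (fun h => (X : ℚ[X]) + C ((h : ℚ)⁻¹)) T

@[simp] lemma wt_leaf : wt S (leaf : MTree (m+1)) = 1 := rfl

lemma wt_node (c : Fin (m+1) → MTree (m+1)) :
    wt S (node c) = ((X : ℚ[X]) + C (((internalsS S (node c) : ℚ))⁻¹)) * ∏ i, wt S (c i) := rfl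

/-- product of weights over all non-root internal vertices -/
noncomputable def Wp : MTree (m + 1) → ℚ[X]
  | leaf => 1
  | node c => ∏ i, wt S (c i)

@[simp] lemma Wp_leaf : Wp S (leaf : MTree (m+1)) = 1 := rfl
@[simp] lemma Wp_node (c : Fin (m+1) → MTree (m+1)) : Wp S (node c) = ∏ i, wt S (c i) := rfl

/-- the set of paths (sequences of child indices avoiding `S`-indices) from the
root to a surviving internal vertex -/
def survSet : MTree (m + 1) → Finset (List (Fin (m + 1)))
  | leaf => ∅
  | node c => insert []
      (((S.image Fin.castSucc)ᶜ).biUnion fun i => (survSet (c i)).image (List.cons i))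

@[simp] lemma survSet_leaf : survSet S (leaf : MTree (m+1)) = ∅ := rfl

lemma mem_survSet_node {c : Fin (m+1) → MTree (m+1)} {p : List (Fin (m+1))} :
    p ∈ survSet S (node c) ↔
      p = [] ∨ ∃ i ∈ (S.image Fin.castSucc)ᶜ, ∃ q ∈ survSet S (c i), p = i :: q := by
  simp only [survSet, mem_insert, mem_biUnion, mem_image]
  constructor
  · rintro (rfl | ⟨i, hi, q, hq, rfl⟩)
    · exact Or.inl rfl
    · exact Or.inr ⟨i, hi, q, hq, rfl⟩
  · rintro (rfl | ⟨i, hi, q, hq, rfl⟩)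
    · exact Or.inl rfl
    · exact Or.inr ⟨i, hi, q, hq, rfl⟩

/-- sums over `survSet (node c)` decompose -/
lemma sum_survSet_node {M : Type*} [AddCommMonoid M] (c : Fin (m+1) → MTree (m+1))
    (F : List (Fin (m+1)) → M) :
    ∑ p ∈ survSet S (node c), F p =
      F [] + ∑ i ∈ (S.image Fin.castSucc)ᶜ, ∑ q ∈ survSet S (c i), F (i :: q) := by
  rw [survSet, Finset.sum_insert, Finset.sum_biUnion]
  · congr 1
    refine Finset.sum_congr rfl fun i _ => ?_
    rw [Finset.sum_image (by intro a _ b _ h; injection h)]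
  · intro i _ j _ hij
    simp only [Finset.disjoint_left, mem_image]
    rintro p ⟨q, _, rfl⟩ ⟨q', _, h⟩
    injection h with h1 _; exact hij h1.symm
  · simp only [mem_biUnion, mem_image]
    rintro ⟨i, -, q, -, h⟩
    cases h

lemma card_survSet : ∀ T : MTree (m+1), (survSet S T).card = internalsS S T := by
  intro T
  induction T with
  | leaf => simp [internalsS]
  | node c ih =>
    rw [Finset.card_eq_sum_ones, sum_survSet_node, internalsS]
    congr 1
    exact Finset.sum_congr rfl fun i _ => by rw [← ih i, Finset.card_eq_sum_ones]

def subtreeAt : MTree (m+1) → List (Fin (m+1)) → MTree (m+1)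
  | T, [] => T
  | leaf, _ :: _ => leaf
  | node c, i :: p => subtreeAt (c i) p

@[simp] lemma subtreeAt_nil (T : MTree (m+1)) : subtreeAt T [] = T := by cases T <;> rfl
@[simp] lemma subtreeAt_node (c : Fin (m+1) → MTree (m+1)) (i : Fin (m+1)) (p : List (Fin (m+1))) :
    subtreeAt (node c) (i :: p) = subtreeAt (c i) p := rfl

def replaceAt : MTree (m+1) → List (Fin (m+1)) → MTree (m+1) → MTree (m+1)
  | _, [], B => B
  | leaf, _ :: _, _ => leaf
  | node c, i :: p, B => node (Function.update c i (replaceAt (c i) p B))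

@[simp] lemma replaceAt_nil (T B : MTree (m+1)) : replaceAt T [] B = B := by cases T <;> rfl
@[simp] lemma replaceAt_node (c : Fin (m+1) → MTree (m+1)) (i : Fin (m+1))
    (p : List (Fin (m+1))) (B : MTree (m+1)) :
    replaceAt (node c) (i :: p) B = node (Function.update c i (replaceAt (c i) p B)) := rfl

/-- g7 -/
lemma replaceAt_replaceAt : ∀ (q : List (Fin (m+1))) (T B B' : MTree (m+1)),
    replaceAt (replaceAt T q B) q B' = replaceAt T q B' := by
  intro q
  induction q with
  | nil => intro T B B'; simp
  | cons i p ih =>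
    intro T B B'
    cases T with
    | leaf => rfl
    | node c =>
      simp only [replaceAt_node, Function.update_self]
      rw [Function.update_idem, ih]

/-- g9 -/
lemma replaceAt_subtreeAt : ∀ (q : List (Fin (m+1))) (T : MTree (m+1)),
    replaceAt T q (subtreeAt T q) = T := by
  intro q
  induction q with
  | nil => intro T; simp
  | cons i p ih =>
    intro T
    cases T with
    | leaf => rfl
    | node c =>
      simp only [replaceAt_node, subtreeAt_node, ih]
      rw [Function.update_eq_self]


lemma survSet_cons_elim {c : Fin (m+1) → MTree (m+1)} {i : Fin (m+1)} {p : List (Fin (m+1))}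
    (h : i :: p ∈ survSet S (node c)) :
    i ∈ (S.image Fin.castSucc)ᶜ ∧ p ∈ survSet S (c i) := by
  rcases (mem_survSet_node S).1 h with h' | ⟨j, hj, q, hq, he⟩
  · exact absurd h' (by simp)
  · injection he with h1 h2
    subst h1; subst h2
    exact ⟨hj, hq⟩

lemma mem_survSet_of_cons {c : Fin (m+1) → MTree (m+1)} {i : Fin (m+1)} {p : List (Fin (m+1))}
    (hi : i ∈ (S.image Fin.castSucc)ᶜ) (hp : p ∈ survSet S (c i)) :
    i :: p ∈ survSet S (node c) :=
  (mem_survSet_node S).2 (Or.inr ⟨i, hi, p, hp, rfl⟩)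

section g
variable {S} {r : Fin (m+1)}

lemma sum_update_internals (c : Fin (m+1) → MTree (m+1)) (i : Fin (m+1)) (B : MTree (m+1)) :
    ∑ j, (Function.update c i B j).internals
      = B.internals + ∑ j ∈ Finset.univ \ {i}, (c j).internals := by
  rw [Finset.sum_eq_sum_sdiff_singleton_add (Finset.mem_univ i)
      (fun j => (Function.update c i B j).internals), Function.update_self, add_comm]
  congr 1
  refine Finset.sum_congr rfl fun j hj => ?_
  rw [Function.update_of_ne (by simpa using (Finset.mem_sdiff.1 hj).2)]

lemma sum_internals_split (c : Fin (m+1) → MTree (m+1)) (i : Fin (m+1)) :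
    ∑ j, (c j).internals = (c i).internals + ∑ j ∈ Finset.univ \ {i}, (c j).internals := by
  rw [Finset.sum_eq_sum_sdiff_singleton_add (Finset.mem_univ i) (fun j => (c j).internals), add_comm]

lemma prod_update_wt (c : Fin (m+1) → MTree (m+1)) (i : Fin (m+1)) (B : MTree (m+1)) :
    ∏ j, wt S (Function.update c i B j)
      = wt S B * ∏ j ∈ Finset.univ \ {i}, wt S (c j) := by
  rw [Finset.prod_eq_prod_diff_singleton_mul (Finset.mem_univ i)
      (fun j => wt S (Function.update c i B j)), Function.update_self, mul_comm]
  congr 1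
  refine Finset.prod_congr rfl fun j hj => ?_
  rw [Function.update_of_ne (by simpa using (Finset.mem_sdiff.1 hj).2)]

lemma prod_wt_split (c : Fin (m+1) → MTree (m+1)) (i : Fin (m+1)) :
    ∏ j, wt S (c j) = wt S (c i) * ∏ j ∈ Finset.univ \ {i}, wt S (c j) := by
  rw [Finset.prod_eq_prod_diff_singleton_mul (Finset.mem_univ i) (fun j => wt S (c j)), mul_comm]

/-- g6 -/
lemma subtreeAt_replaceAt :
    ∀ (p : List (Fin (m+1))) (T : MTree (m+1)), p ∈ survSet S T → ∀ B,
      subtreeAt (replaceAt T (p ++ [r]) B) (p ++ [r]) = B := by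
  intro p
  induction p with
  | nil =>
    intro T hT B
    cases T with
    | leaf => simp at hT
    | node c => simp
  | cons i p ih =>
    intro T hT B
    cases T with
    | leaf => simp at hT
    | node c =>
      obtain ⟨hi, hp⟩ := survSet_cons_elim _ hT
      simp only [List.cons_append, replaceAt_node, subtreeAt_node, Function.update_self]
      exact ih (c i) hp B

/-- g1 -/
lemma survSet_replaceAt (hr : r ∈ S.image Fin.castSucc) :
    ∀ (p : List (Fin (m+1))) (T : MTree (m+1)), p ∈ survSet S T → ∀ B,
      survSet S (replaceAt T (p ++ [r]) B) = survSet S T := by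
  intro p
  induction p with
  | nil =>
    intro T hT B
    cases T with
    | leaf => simp at hT
    | node c =>
      simp only [List.nil_append, replaceAt_node, replaceAt_nil]
      rw [survSet, survSet]
      congr 1
      refine Finset.biUnion_congr rfl fun j hj => ?_
      rw [Function.update_of_ne (by rintro rfl; exact (Finset.mem_compl.1 hj) hr)]
  | cons i p ih =>
    intro T hT B
    cases T with
    | leaf => simp at hT
    | node c =>
      obtain ⟨hi, hp⟩ := survSet_cons_elim _ hT
      simp only [List.cons_append, replaceAt_node]
      rw [survSet, survSet]
      congr 1
      refine Finset.biUnion_congr rfl fun j hj => ?_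
      rcases eq_or_ne j i with rfl | hne
      · rw [Function.update_self, ih (c j) hp B]
      · rw [Function.update_of_ne hne]

/-- g2 -/
lemma internalsS_replaceAt (hr : r ∈ S.image Fin.castSucc) :
    ∀ (p : List (Fin (m+1))) (T : MTree (m+1)), p ∈ survSet S T → ∀ B,
      internalsS S (replaceAt T (p ++ [r]) B) = internalsS S T := by
  intro p
  induction p with
  | nil =>
    intro T hT B
    cases T with
    | leaf => simp at hT
    | node c =>
      simp only [List.nil_append, replaceAt_node, replaceAt_nil]
      rw [internalsS, internalsS]
      congr 1
      refine Finset.sum_congr rfl fun j hj => ?_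
      rw [Function.update_of_ne (by rintro rfl; exact (Finset.mem_compl.1 hj) hr)]
  | cons i p ih =>
    intro T hT B
    cases T with
    | leaf => simp at hT
    | node c =>
      obtain ⟨hi, hp⟩ := survSet_cons_elim _ hT
      simp only [List.cons_append, replaceAt_node]
      rw [internalsS, internalsS]
      congr 1
      refine Finset.sum_congr rfl fun j hj => ?_
      rcases eq_or_ne j i with rfl | hne
      · rw [Function.update_self, ih (c j) hp B]
      · rw [Function.update_of_ne hne]

/-- g3 -/
lemma internals_replaceAt :
    ∀ (p : List (Fin (m+1))) (T : MTree (m+1)), p ∈ survSet S T →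
      subtreeAt T (p ++ [r]) = leaf → ∀ B,
      internals (replaceAt T (p ++ [r]) B) = internals T + internals B := by
  intro p
  induction p with
  | nil =>
    intro T hT hs B
    cases T with
    | leaf => simp at hT
    | node c =>
      simp only [List.nil_append, subtreeAt_node, subtreeAt_nil] at hs
      simp only [List.nil_append, replaceAt_node, replaceAt_nil]
      rw [internals, internals, sum_update_internals, sum_internals_split c r, hs]
      simp only [internals]
      omega
  | cons i p ih =>
    intro T hT hs B
    cases T with
    | leaf => simp at hT
    | node c =>
      obtain ⟨hi, hp⟩ := survSet_cons_elim _ hT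
      simp only [List.cons_append, subtreeAt_node] at hs
      simp only [List.cons_append, replaceAt_node]
      rw [internals, internals, sum_update_internals, sum_internals_split c i,
        ih (c i) hp hs B]
      omega

/-- g4, g5 -/
lemma wp_wt_replaceAt (hr : r ∈ S.image Fin.castSucc) :
    ∀ (p : List (Fin (m+1))) (T : MTree (m+1)), p ∈ survSet S T →
      subtreeAt T (p ++ [r]) = leaf → ∀ B,
      Wp S (replaceAt T (p ++ [r]) B) = Wp S T * wt S B ∧
        wt S (replaceAt T (p ++ [r]) B) = wt S T * wt S B := by
  intro p
  induction p with
  | nil =>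
    intro T hT hs B
    cases T with
    | leaf => simp at hT
    | node c =>
      simp only [List.nil_append, subtreeAt_node, subtreeAt_nil] at hs
      have hW : Wp S (replaceAt (node c) [r] B) = Wp S (node c) * wt S B := by
        simp only [replaceAt_node, replaceAt_nil, Wp_node]
        rw [prod_update_wt, prod_wt_split c r, hs, wt_leaf]
        ring
      refine ⟨hW, ?_⟩
      have hH : internalsS S (replaceAt (node c) ([] ++ [r]) B) = internalsS S (node c) :=
        internalsS_replaceAt hr [] (node c) hT B
      simp only [List.nil_append] at hH ⊢
      cases hrepl : replaceAt (node c) [r] B with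
      | leaf => exact absurd hrepl (by simp [replaceAt])
      | node c' =>
        rw [← hrepl, show wt S (replaceAt (node c) [r] B) =
          ((X : ℚ[X]) + C (((internalsS S (replaceAt (node c) [r] B) : ℚ))⁻¹)) *
            Wp S (replaceAt (node c) [r] B) from by rw [hrepl]; rfl]
        rw [hH, hW, wt_node, Wp_node]
        ring
  | cons i p ih =>
    intro T hT hs B
    cases T with
    | leaf => simp at hT
    | node c =>
      obtain ⟨hi, hp⟩ := survSet_cons_elim _ hT
      simp only [List.cons_append, subtreeAt_node] at hs
      obtain ⟨ihW, ihw⟩ := ih (c i) hp hs B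
      have hW : Wp S (replaceAt (node c) (i :: p ++ [r]) B) = Wp S (node c) * wt S B := by
        simp only [List.cons_append, replaceAt_node, Wp_node]
        rw [prod_update_wt, prod_wt_split c i, ihw]
        ring
      refine ⟨hW, ?_⟩
      have hH : internalsS S (replaceAt (node c) ((i :: p) ++ [r]) B) = internalsS S (node c) :=
        internalsS_replaceAt hr (i :: p) (node c) hT B
      simp only [List.cons_append] at hH hW ⊢
      cases hrepl : replaceAt (node c) (i :: (p ++ [r])) B with
      | leaf => exact absurd hrepl (by simp [replaceAt])
      | node c' =>
        rw [← hrepl, show wt S (replaceAt (node c) (i :: (p ++ [r])) B) =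
          ((X : ℚ[X]) + C (((internalsS S (replaceAt (node c) (i :: (p ++ [r])) B) : ℚ))⁻¹)) *
            Wp S (replaceAt (node c) (i :: (p ++ [r])) B) from by rw [hrepl]; rfl]
        rw [hH, hW, wt_node, Wp_node]
        ring

end g

lemma internals_eq_internalsS_add :
    ∀ T : MTree (m+1), T.internals = internalsS S T +
      ∑ r ∈ S.image Fin.castSucc, ∑ p ∈ survSet S T, (subtreeAt T (p ++ [r])).internals := by
  intro T
  induction T with
  | leaf => simp [internals, internalsS]
  | node c ih =>
    have hsum : ∀ r : Fin (m+1),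
        ∑ p ∈ survSet S (node c), (subtreeAt (node c) (p ++ [r])).internals
          = (c r).internals + ∑ i ∈ (S.image Fin.castSucc)ᶜ,
              ∑ p ∈ survSet S (c i), (subtreeAt (c i) (p ++ [r])).internals := by
      intro r
      rw [sum_survSet_node S c (fun p => (subtreeAt (node c) (p ++ [r])).internals)]
      simp only [List.nil_append, List.cons_append, subtreeAt_node, subtreeAt_nil]
    have h1 : ∑ i, (c i).internals
        = ∑ i ∈ S.image Fin.castSucc, (c i).internals
          + ∑ i ∈ (S.image Fin.castSucc)ᶜ, (c i).internals :=
      (Finset.sum_add_sum_compl _ _).symm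
    have h2 : ∑ i ∈ (S.image Fin.castSucc)ᶜ, (c i).internals
        = ∑ i ∈ (S.image Fin.castSucc)ᶜ, internalsS S (c i)
          + ∑ i ∈ (S.image Fin.castSucc)ᶜ, ∑ r ∈ S.image Fin.castSucc,
              ∑ p ∈ survSet S (c i), (subtreeAt (c i) (p ++ [r])).internals := by
      rw [← Finset.sum_add_distrib]
      exact Finset.sum_congr rfl fun i _ => ih i
    have h3 : ∑ r ∈ S.image Fin.castSucc,
          ∑ p ∈ survSet S (node c), (subtreeAt (node c) (p ++ [r])).internals
        = ∑ r ∈ S.image Fin.castSucc, (c r).internals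
          + ∑ r ∈ S.image Fin.castSucc, ∑ i ∈ (S.image Fin.castSucc)ᶜ,
              ∑ p ∈ survSet S (c i), (subtreeAt (c i) (p ++ [r])).internals := by
      rw [← Finset.sum_add_distrib]
      exact Finset.sum_congr rfl fun r _ => hsum r
    have h4 : ∑ r ∈ S.image Fin.castSucc, ∑ i ∈ (S.image Fin.castSucc)ᶜ,
          ∑ p ∈ survSet S (c i), (subtreeAt (c i) (p ++ [r])).internals
        = ∑ i ∈ (S.image Fin.castSucc)ᶜ, ∑ r ∈ S.image Fin.castSucc,
          ∑ p ∈ survSet S (c i), (subtreeAt (c i) (p ++ [r])).internals :=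
      Finset.sum_comm
    rw [internals, internalsS, h3, h4]
    omega


def kids : MTree (m+1) → (Fin (m+1) → MTree (m+1))
  | leaf => fun _ => leaf
  | node c => c

lemma node_kids {T : MTree (m+1)} (hT : T ≠ leaf) : node (kids T) = T := by
  cases T with
  | leaf => exact absurd rfl hT
  | node c => rfl

/-- The generating function `Σ_T w(T) t^{n(T)}`. -/
noncomputable def HS : PowerSeries ℚ[X] :=
  PowerSeries.mk fun n => ∑ T ∈ treesN n, wt S T

lemma coeff_HS (n : ℕ) : (PowerSeries.coeff n) (HS S) = ∑ T ∈ treesN n, wt S T :=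
  PowerSeries.coeff_mk _ _

lemma constantCoeff_HS : (PowerSeries.constantCoeff (R := ℚ[X])) (HS S) = 1 := by
  have := coeff_HS S 0
  rw [PowerSeries.coeff_zero_eq_constantCoeff] at this
  rw [this, treesN_zero]
  simp

lemma HS_ne_zero : HS S ≠ 0 := fun h => by
  have := constantCoeff_HS S
  rw [h] at this
  simp at this

/-- (M1): coefficients of the `(m+1)`-st power. -/
lemma coeff_HS_pow (n : ℕ) :
    (PowerSeries.coeff n) (HS S ^ (m+1)) = ∑ T ∈ treesN (n+1), Wp S T := by
  have h1 : HS S ^ (m+1) = ∏ _i : Fin (m+1), HS S := by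
    rw [Finset.prod_const, Finset.card_univ, Fintype.card_fin]
  rw [h1, PowerSeries.coeff_prod]
  have h2 : ∀ l : Fin (m+1) →₀ ℕ, ∏ i, (PowerSeries.coeff (l i)) (HS S)
      = ∑ c ∈ Fintype.piFinset (fun i => treesN (l i)), ∏ i, wt S (c i) := by
    intro l
    rw [Finset.prod_congr rfl fun i _ => coeff_HS S (l i), Finset.prod_univ_sum]
  rw [Finset.sum_congr rfl fun l _ => h2 l, Finset.sum_sigma']
  refine Finset.sum_nbij' (fun x => node x.2)
    (fun T => ⟨Finsupp.equivFunOnFinite.symm (fun i => (kids T i).internals), kids T⟩)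
    ?_ ?_ ?_ ?_ ?_
  · rintro ⟨l, c⟩ hx
    rw [Finset.mem_sigma] at hx
    obtain ⟨hl, hc⟩ := hx
    rw [Finset.mem_finsuppAntidiag] at hl
    rw [Fintype.mem_piFinset] at hc
    rw [mem_treesN, internals]
    have : ∀ i, (c i).internals = l i := fun i => mem_treesN.1 (hc i)
    rw [Finset.sum_congr rfl fun i _ => this i]
    rw [show ∑ i, l i = Finset.univ.sum l from rfl, hl.1]
    omega
  · intro T hT
    rw [mem_treesN] at hT
    have hTne : T ≠ leaf := by
      intro h; rw [h] at hT; simp [internals] at hT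
    rw [Finset.mem_sigma]
    constructor
    · rw [Finset.mem_finsuppAntidiag]
      constructor
      · have : T.internals = n + 1 := hT
        rw [← node_kids hTne, internals] at this
        simpa using by omega
      · intro i _; exact Finset.mem_univ i
    · rw [Fintype.mem_piFinset]
      intro i
      rw [mem_treesN]
      simp
  · rintro ⟨l, c⟩ hx
    rw [Finset.mem_sigma] at hx
    obtain ⟨hl, hc⟩ := hx
    rw [Fintype.mem_piFinset] at hc
    have : ∀ i, (c i).internals = l i := fun i => mem_treesN.1 (hc i)
    have hk : kids (node c) = c := rfl
    refine Sigma.ext ?_ ?_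
    · simp only [hk]
      ext i
      simp [this i]
    · simp [hk]
  · intro T hT
    rw [mem_treesN] at hT
    have hTne : T ≠ leaf := by
      intro h; rw [h] at hT; simp [internals] at hT
    exact node_kids hTne
  · rintro ⟨l, c⟩ hx
    simp [Wp]


/-- series of trees with a marked surviving vertex whose `r`-subtree is a leaf -/
noncomputable def Xi (r : Fin (m+1)) : PowerSeries ℚ[X] :=
  PowerSeries.mk fun a => ∑ T ∈ treesN (a+1),
    ∑ p ∈ (survSet S T).filter (fun p => subtreeAt T (p ++ [r]) = leaf),
      C (((internalsS S T : ℚ))⁻¹) * Wp S T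

/-- series of trees with a marked surviving vertex, with an extra weight `g` on the
`r`-subtree of the mark -/
noncomputable def Mks (r : Fin (m+1)) (g : MTree (m+1) → ℚ[X]) : PowerSeries ℚ[X] :=
  PowerSeries.mk fun n => ∑ T ∈ treesN (n+1), ∑ p ∈ survSet S T,
    C (((internalsS S T : ℚ))⁻¹) * Wp S T * g (subtreeAt T (p ++ [r]))

/-- series of trees with weight `w(B)·g(B)` -/
noncomputable def SerG (g : MTree (m+1) → ℚ[X]) : PowerSeries ℚ[X] :=
  PowerSeries.mk fun b => ∑ B ∈ treesN b, wt S B * g B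

/-- **the grafting bijection** -/
lemma Mks_eq_Xi_mul (r : Fin (m+1)) (hr : r ∈ S.image Fin.castSucc)
    (g : MTree (m+1) → ℚ[X]) :
    Mks S r g = Xi S r * SerG S g := by
  refine PowerSeries.ext fun n => ?_
  rw [PowerSeries.coeff_mul]
  simp only [Mks, Xi, SerG, PowerSeries.coeff_mk]
  calc ∑ T ∈ treesN (n+1), ∑ p ∈ survSet S T,
        C (((internalsS S T : ℚ))⁻¹) * Wp S T * g (subtreeAt T (p ++ [r]))
      = ∑ x ∈ (treesN (n+1)).sigma (fun T => survSet S T),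
          C (((internalsS S x.1 : ℚ))⁻¹) * Wp S x.1 * g (subtreeAt x.1 (x.2 ++ [r])) :=
        (Finset.sum_sigma (treesN (n+1)) (fun T => survSet S T)
          (fun x => C (((internalsS S x.1 : ℚ))⁻¹) * Wp S x.1
            * g (subtreeAt x.1 (x.2 ++ [r])))).symm
    _ = ∑ y ∈ (Finset.HasAntidiagonal.antidiagonal n).sigma
            (fun ab => (treesN (ab.1+1)).sigma
              (fun T₀ => ((survSet S T₀).filter
                (fun p => subtreeAt T₀ (p ++ [r]) = leaf)) ×ˢ treesN ab.2)),
          C (((internalsS S y.2.1 : ℚ))⁻¹) * Wp S y.2.1 * (wt S y.2.2.2 * g y.2.2.2) := ?_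
    _ = ∑ ab ∈ Finset.HasAntidiagonal.antidiagonal n,
          (∑ T₀ ∈ treesN (ab.1+1),
            ∑ p ∈ (survSet S T₀).filter (fun p => subtreeAt T₀ (p ++ [r]) = leaf),
              C (((internalsS S T₀ : ℚ))⁻¹) * Wp S T₀)
          * (∑ B ∈ treesN ab.2, wt S B * g B) := ?_
  case calc_2 =>
    rw [Finset.sum_sigma]
    refine Finset.sum_congr rfl fun ab _ => ?_
    rw [Finset.sum_sigma, Finset.sum_mul]
    refine Finset.sum_congr rfl fun T₀ _ => ?_
    rw [Finset.sum_mul_sum, Finset.sum_product]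
  case calc_1 =>
    refine Finset.sum_nbij'
      (fun x => ⟨((replaceAt x.1 (x.2 ++ [r]) leaf).internals - 1,
          (subtreeAt x.1 (x.2 ++ [r])).internals),
        ⟨replaceAt x.1 (x.2 ++ [r]) leaf, (x.2, subtreeAt x.1 (x.2 ++ [r]))⟩⟩)
      (fun y => ⟨replaceAt y.2.1 (y.2.2.1 ++ [r]) y.2.2.2, y.2.2.1⟩)
      ?_ ?_ ?_ ?_ ?_
    · rintro ⟨T, p⟩ hx
      rw [Finset.mem_sigma] at hx
      obtain ⟨hT, hp⟩ := hx
      rw [mem_treesN] at hT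
      replace hT : T.internals = n + 1 := hT
      replace hp : p ∈ survSet S T := hp
      dsimp only
      simp only [Finset.mem_sigma, Finset.mem_product, Finset.HasAntidiagonal.mem_antidiagonal,
        Finset.mem_filter, mem_treesN]
      set q := p ++ [r] with hq
      set B := subtreeAt T q with hB
      set T₀ := replaceAt T q leaf with hT₀def
      have hs0 : subtreeAt T₀ q = leaf := subtreeAt_replaceAt p T hp leaf
      have hp0 : p ∈ survSet S T₀ := by
        rw [survSet_replaceAt hr p T hp leaf]; exact hp
      have hT₀ne : T₀ ≠ leaf := by
        intro h; rw [h] at hp0; simp at hp0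
      have hTrec : replaceAt T₀ q B = T := by
        rw [hT₀def, replaceAt_replaceAt, hB, replaceAt_subtreeAt]
      have hn : T₀.internals + B.internals = T.internals := by
        conv_rhs => rw [← hTrec]
        exact (internals_replaceAt p T₀ hp0 hs0 B).symm
      have hT₀pos : 1 ≤ T₀.internals := by
        rcases Nat.eq_zero_or_pos T₀.internals with h | h
        · exact absurd (internals_eq_zero.1 h) hT₀ne
        · exact h
      refine ⟨by omega, by omega, ⟨hp0, hs0⟩, by trivial⟩
    · rintro ⟨ab, T₀, p, B⟩ hy
      simp only [Finset.mem_sigma, Finset.mem_product, Finset.HasAntidiagonal.mem_antidiagonal,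
        Finset.mem_filter, mem_treesN] at hy
      obtain ⟨hab, ⟨hT₀, ⟨hp0, hs0⟩, hB⟩⟩ := hy
      rw [Finset.mem_sigma, mem_treesN]
      constructor
      · rw [internals_replaceAt p T₀ hp0 hs0 B]
        omega
      · rw [survSet_replaceAt hr p T₀ hp0 B]; exact hp0
    · rintro ⟨T, p⟩ hx
      rw [Finset.mem_sigma] at hx
      obtain ⟨hT, hp⟩ := hx
      have hTrec : replaceAt (replaceAt T (p ++ [r]) leaf) (p ++ [r])
          (subtreeAt T (p ++ [r])) = T := by
        rw [replaceAt_replaceAt, replaceAt_subtreeAt]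
      dsimp only
      rw [hTrec]
    · rintro ⟨ab, T₀, p, B⟩ hy
      simp only [Finset.mem_sigma, Finset.mem_product, Finset.HasAntidiagonal.mem_antidiagonal,
        Finset.mem_filter, mem_treesN] at hy
      obtain ⟨hab, ⟨hT₀, ⟨hp0, hs0⟩, hB⟩⟩ := hy
      dsimp only
      set q := p ++ [r] with hq
      have hsub : subtreeAt (replaceAt T₀ q B) q = B := subtreeAt_replaceAt p T₀ hp0 B
      have hstrip : replaceAt (replaceAt T₀ q B) q leaf = T₀ := by
        rw [replaceAt_replaceAt]
        conv_rhs => rw [← replaceAt_subtreeAt q T₀]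
        rw [hs0]
      rw [hsub, hstrip]
      have h1 : T₀.internals - 1 = ab.1 := by omega
      rw [h1, hB]
    · rintro ⟨T, p⟩ hx
      rw [Finset.mem_sigma] at hx
      obtain ⟨hT, hp⟩ := hx
      dsimp only
      set q := p ++ [r] with hq
      set B := subtreeAt T q with hB
      set T₀ := replaceAt T q leaf with hT₀def
      have hs0 : subtreeAt T₀ q = leaf := subtreeAt_replaceAt p T hp leaf
      have hp0 : p ∈ survSet S T₀ := by
        rw [survSet_replaceAt hr p T hp leaf]; exact hp
      have hTrec : replaceAt T₀ q B = T := by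
        rw [hT₀def, replaceAt_replaceAt, hB, replaceAt_subtreeAt]
      have hH : internalsS S T₀ = internalsS S T := internalsS_replaceAt hr p T hp leaf
      have hWp : Wp S T = Wp S T₀ * wt S B := by
        conv_lhs => rw [← hTrec]
        exact (wp_wt_replaceAt hr p T₀ hp0 hs0 B).1
      rw [hH, hWp]
      ring


lemma internalsS_pos {T : MTree (m+1)} (hT : T ≠ leaf) : 1 ≤ internalsS S T := by
  cases T with
  | leaf => exact absurd rfl hT
  | node c => rw [internalsS]; omega

/-- `SerG` with constant weight 1 is `HS`. -/
lemma SerG_one : SerG S (fun _ => 1) = HS S := by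
  refine PowerSeries.ext fun n => ?_
  simp [SerG, HS]

/-- `SerG` with weight `n(B)` is `X·H'`. -/
lemma SerG_natCast : SerG S (fun B => C ((B.internals : ℚ)))
    = PowerSeries.X * d⁄dX ℚ[X] (HS S) := by
  refine PowerSeries.ext fun b => ?_
  cases b with
  | zero =>
    rw [PowerSeries.coeff_zero_eq_constantCoeff, map_mul]
    simp only [PowerSeries.constantCoeff_X, zero_mul]
    simp only [SerG]
    rw [← PowerSeries.coeff_zero_eq_constantCoeff, PowerSeries.coeff_mk, treesN_zero]
    simp [internals]
  | succ e =>
    rw [PowerSeries.coeff_succ_X_mul, PowerSeries.coeff_derivative, coeff_HS,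
      Finset.sum_mul]
    simp only [SerG, PowerSeries.coeff_mk]
    refine Finset.sum_congr rfl fun B hB => ?_
    rw [mem_treesN] at hB
    rw [hB]
    norm_cast

/-- Θ-identity: `Mks r 1 = H^{m+1}`. -/
lemma Mks_one (r : Fin (m+1)) : Mks S r (fun _ => 1) = HS S ^ (m+1) := by
  refine PowerSeries.ext fun n => ?_
  rw [coeff_HS_pow]
  simp only [Mks, PowerSeries.coeff_mk, mul_one]
  refine Finset.sum_congr rfl fun T hT => ?_
  rw [mem_treesN] at hT
  have hTne : T ≠ leaf := by
    intro h; rw [h] at hT; simp [internals] at hT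
  have hpos : 1 ≤ internalsS S T := internalsS_pos S hTne
  have hnz : ((internalsS S T : ℚ)) ≠ 0 := Nat.cast_ne_zero.2 (by omega)
  rw [Finset.sum_const, card_survSet, nsmul_eq_mul]
  rw [show ((internalsS S T : ℚ[X])) = C ((internalsS S T : ℚ)) by norm_cast]
  rw [← mul_assoc, ← map_mul, mul_inv_cancel₀ hnz, map_one, one_mul]

/-- `E_r = X·H^m·H'` for `r` in the deleted index set. -/
lemma Mks_natCast (r : Fin (m+1)) (hr : r ∈ S.image Fin.castSucc) :
    Mks S r (fun B => C ((B.internals : ℚ)))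
      = PowerSeries.X * HS S ^ m * d⁄dX ℚ[X] (HS S) := by
  have h1 : Mks S r (fun B => C ((B.internals : ℚ))) * HS S
      = (PowerSeries.X * HS S ^ m * d⁄dX ℚ[X] (HS S)) * HS S := by
    rw [Mks_eq_Xi_mul S r hr, SerG_natCast]
    have h2 : Xi S r * HS S = HS S ^ (m+1) := by
      conv_lhs => rw [← SerG_one S]
      rw [← Mks_eq_Xi_mul S r hr, Mks_one]
    calc Xi S r * (PowerSeries.X * d⁄dX ℚ[X] (HS S)) * HS S
        = (Xi S r * HS S) * (PowerSeries.X * d⁄dX ℚ[X] (HS S)) := by ring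
      _ = HS S ^ (m+1) * (PowerSeries.X * d⁄dX ℚ[X] (HS S)) := by rw [h2]
      _ = (PowerSeries.X * HS S ^ m * d⁄dX ℚ[X] (HS S)) * HS S := by ring
  exact mul_right_cancel₀ (HS_ne_zero S) h1

/-- the per-tree decomposition of `w(T)·n(T)` -/
lemma wt_mul_natCast {T : MTree (m+1)} (hT : T ≠ leaf) :
    wt S T * C ((T.internals : ℚ)) =
      (X : ℚ[X]) * Wp S T * C ((T.internals : ℚ)) + Wp S T
      + ∑ r ∈ S.image Fin.castSucc, ∑ p ∈ survSet S T,
          C (((internalsS S T : ℚ))⁻¹) * Wp S T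
            * C (((subtreeAt T (p ++ [r])).internals : ℚ)) := by
  have hpos : 1 ≤ internalsS S T := internalsS_pos S hT
  have hnz : ((internalsS S T : ℚ)) ≠ 0 := Nat.cast_ne_zero.2 (by omega)
  obtain ⟨c, rfl⟩ : ∃ c, T = node c := by
    cases T with
    | leaf => exact absurd rfl hT
    | node c => exact ⟨c, rfl⟩
  have hq : (((node c).internals : ℚ)) = ((internalsS S (node c) : ℚ))
      + ∑ r ∈ S.image Fin.castSucc, ∑ p ∈ survSet S (node c),
          (((subtreeAt (node c) (p ++ [r])).internals : ℚ)) := by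
    have h := internals_eq_internalsS_add S (node c)
    exact_mod_cast congrArg (Nat.cast : ℕ → ℚ) h
  have hCn : C (((node c).internals : ℚ)) = C ((internalsS S (node c) : ℚ))
      + ∑ r ∈ S.image Fin.castSucc, ∑ p ∈ survSet S (node c),
          C (((subtreeAt (node c) (p ++ [r])).internals : ℚ)) := by
    rw [hq, map_add, map_sum]
    congr 1
    exact Finset.sum_congr rfl fun r _ => map_sum (C : ℚ →+* ℚ[X]) _ _
  have hmulsum : ∑ r ∈ S.image Fin.castSucc, ∑ p ∈ survSet S (node c),
        C (((internalsS S (node c) : ℚ))⁻¹) * Wp S (node c)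
          * C (((subtreeAt (node c) (p ++ [r])).internals : ℚ))
      = C (((internalsS S (node c) : ℚ))⁻¹) * Wp S (node c)
        * ∑ r ∈ S.image Fin.castSucc, ∑ p ∈ survSet S (node c),
            C (((subtreeAt (node c) (p ++ [r])).internals : ℚ)) := by
    rw [Finset.mul_sum]
    exact Finset.sum_congr rfl fun r _ => by rw [Finset.mul_sum]
  have h1 : C ((internalsS S (node c) : ℚ)) * C (((internalsS S (node c) : ℚ))⁻¹) = 1 := by
    rw [← map_mul, mul_inv_cancel₀ hnz, map_one]
  rw [wt_node, hCn, hmulsum]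
  rw [show Wp S (node c) = ∏ i, wt S (c i) from rfl] at *
  linear_combination (∏ i, wt S (c i)) * h1


/-- main decomposition of the derivative -/
lemma main_decomp :
    d⁄dX ℚ[X] (HS S)
      = PowerSeries.C (R := ℚ[X]) (X : ℚ[X]) * d⁄dX ℚ[X] (PowerSeries.X * HS S ^ (m+1))
        + HS S ^ (m+1)
        + ∑ r ∈ S.image Fin.castSucc, Mks S r (fun B => C ((B.internals : ℚ))) := by
  refine PowerSeries.ext fun n => ?_
  rw [map_add, map_add, PowerSeries.coeff_derivative, coeff_HS, Finset.sum_mul]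
  have hterm : ∀ T ∈ treesN (n+1), wt S T * ((n : ℚ[X]) + 1)
      = (X : ℚ[X]) * Wp S T * C ((T.internals : ℚ)) + Wp S T
        + ∑ r ∈ S.image Fin.castSucc, ∑ p ∈ survSet S T,
            C (((internalsS S T : ℚ))⁻¹) * Wp S T
              * C (((subtreeAt T (p ++ [r])).internals : ℚ)) := by
    intro T hT
    rw [mem_treesN] at hT
    have hTne : T ≠ leaf := by
      intro h; rw [h] at hT; simp [internals] at hT
    have hcast : ((n : ℚ[X]) + 1) = C ((T.internals : ℚ)) := by
      rw [hT, map_natCast]; push_cast; ring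
    rw [hcast]
    exact wt_mul_natCast S hTne
  rw [Finset.sum_congr rfl hterm, Finset.sum_add_distrib, Finset.sum_add_distrib]
  congr 1
  · congr 1
    · rw [PowerSeries.coeff_C_mul, PowerSeries.coeff_derivative,
        PowerSeries.coeff_succ_X_mul, coeff_HS_pow]
      have : ∀ T ∈ treesN (n+1), (X : ℚ[X]) * Wp S T * C ((T.internals : ℚ))
          = (X : ℚ[X]) * ((n : ℚ[X]) + 1) * Wp S T := by
        intro T hT
        rw [mem_treesN] at hT
        rw [hT, map_natCast]
        push_cast
        ring
      rw [Finset.sum_congr rfl this, ← Finset.mul_sum]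
      ring
    · exact (coeff_HS_pow S n).symm
  · rw [map_sum]
    refine Finset.sum_comm.trans (Finset.sum_congr rfl fun r _ => ?_)
    rw [Mks, PowerSeries.coeff_mk]

/-- the differential equation for `HS` -/
lemma HS_differential_equation :
    d⁄dX ℚ[X] (HS S) =
      PowerSeries.C (R := ℚ[X]) ((X : ℚ[X]) + 1) * HS S ^ (m + 1) +
        PowerSeries.C (R := ℚ[X])
            (((m : ℚ) - (S.card : ℚ) + 1) • (X : ℚ[X]) +
              (S.card : ℚ) • ((X : ℚ[X]) + 1)) * PowerSeries.X *
          HS S ^ m * d⁄dX ℚ[X] (HS S) := by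
  have main := main_decomp S
  have hEr : ∑ r ∈ S.image Fin.castSucc, Mks S r (fun B => C ((B.internals : ℚ)))
      = ((S.card : ℕ) : PowerSeries ℚ[X])
        * (PowerSeries.X * HS S ^ m * d⁄dX ℚ[X] (HS S)) := by
    rw [Finset.sum_congr rfl (fun r hr => Mks_natCast S r hr), Finset.sum_const,
      Finset.card_image_of_injective _ (Fin.castSucc_injective m), nsmul_eq_mul]
  have hmul : ∀ f g : PowerSeries ℚ[X],
      d⁄dX ℚ[X] (f * g) = f * d⁄dX ℚ[X] g + g * d⁄dX ℚ[X] f := by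
    intro f g
    show PowerSeries.derivativeFun (f * g) = _
    rw [PowerSeries.derivativeFun_mul, smul_eq_mul, smul_eq_mul]
    rfl
  have hpow : ∀ k : ℕ, d⁄dX ℚ[X] (HS S ^ (k+1))
      = ((k+1 : ℕ) : PowerSeries ℚ[X]) * HS S ^ k * d⁄dX ℚ[X] (HS S) := by
    intro k
    induction k with
    | zero => simp
    | succ k ih =>
      rw [pow_succ, hmul, ih]
      push_cast
      ring
  have hD : d⁄dX ℚ[X] (PowerSeries.X * HS S ^ (m+1))
      = HS S ^ (m+1)
        + PowerSeries.X * (((m+1 : ℕ) : PowerSeries ℚ[X])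
            * (HS S ^ m * d⁄dX ℚ[X] (HS S))) := by
    rw [hmul, hpow m, PowerSeries.derivative_X]
    ring
  rw [hEr, hD] at main
  simp only [smul_eq_C_mul, map_add, map_mul, map_one, map_sub, map_natCast] at main ⊢
  push_cast at main ⊢
  linear_combination main


end MTree


lemma hookGFS_eq (m : ℕ) (S : Finset (Fin m)) : hookGFS m S = MTree.HS S := by
  refine congrArg _ (funext fun n => ?_)
  rw [hookPolyS]
  have hset : {T : MTree (m+1) | T.internals = n} = ↑(MTree.treesN n : Finset (MTree (m+1))) := by
    ext T; simp [MTree.mem_treesN]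
  rw [hset, finsum_mem_coe_finset]
  rfl

/-- **Differential equation for `{}_Sℍ_m(x;t)`.**  For `m ≥ 1` and `S ⊆ [m]` with
`s = |S|`:
`{}_Sℍ'_m(x;t) = (x+1) ({}_Sℍ_m)^{m+1} + ((m-s+1)x + s(x+1)) t ({}_Sℍ_m)^m {}_Sℍ'_m`,
the derivative being taken with respect to `t`. -/
theorem hookGFS_differential_equation (m : ℕ) (hm : 1 ≤ m) (S : Finset (Fin m)) :
    d⁄dX (Polynomial ℚ) (hookGFS m S) =
      PowerSeries.C (R := Polynomial ℚ) ((X : ℚ[X]) + 1) * hookGFS m S ^ (m + 1) +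
        PowerSeries.C (R := Polynomial ℚ)
            (((m : ℚ) - (S.card : ℚ) + 1) • (X : ℚ[X]) +
              (S.card : ℚ) • ((X : ℚ[X]) + 1)) * PowerSeries.X *
          hookGFS m S ^ m * d⁄dX (Polynomial ℚ) (hookGFS m S) := by
  rw [hookGFS_eq]
  exact MTree.HS_differential_equation S
end

section
/- For any integers m ≥ 1 and n ≥ 1, the sum over all complete (m+1)-ary trees T with n internal vertices of the product over all internal vertices v of T of (x + 1/h_v) equals ((x+1)/n!) · ∏_{i=1}^{n-1} ((mn+i+1)(x+1) − (m+1)i), as an identity of polynomials in x over ℚ, where h_v denotes the number of internal vertices of the subtree of T rooted at v. -/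
open Polynomial Finset

namespace DuLiu

variable {K : Type*} [Field K] [CharZero K]

/-- generalized binomial coefficient `x(x-1)...(x-r+1)/r!` -/
noncomputable def gbin (x : K) (r : ℕ) : K :=
  (∏ i ∈ Finset.range r, (x - i)) / (r.factorial : K)

@[simp] lemma gbin_zero (x : K) : gbin x 0 = 1 := by simp [gbin]

lemma gbin_one (x : K) : gbin x 1 = x := by simp [gbin]

lemma factorial_ne_zero (r : ℕ) : (r.factorial : K) ≠ 0 :=
  Nat.cast_ne_zero.mpr r.factorial_ne_zero

lemma prod_shift (x : K) (r : ℕ) :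
    (∏ i ∈ Finset.range (r+1), (x - i)) = (∏ i ∈ Finset.range r, (x - 1 - i)) * x := by
  rw [Finset.prod_range_succ']
  congr 1
  · exact Finset.prod_congr rfl fun i _ => by push_cast; ring
  · simp

lemma gbin_pascal (x : K) (r : ℕ) :
    gbin x (r + 1) = gbin (x - 1) (r + 1) + gbin (x - 1) r := by
  have h2 : (∏ i ∈ Finset.range (r+1), (x - 1 - i)) =
      (∏ i ∈ Finset.range r, (x - 1 - i)) * (x - 1 - r) := Finset.prod_range_succ _ _
  rw [gbin, gbin, gbin, prod_shift, h2]
  have hfac : ((r+1).factorial : K) = (r+1) * (r.factorial : K) := by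
    rw [Nat.factorial_succ]; push_cast; ring
  rw [hfac]
  have hr : ((r:K) + 1) ≠ 0 := by
    have h : ((r+1 : ℕ) : K) ≠ 0 := Nat.cast_ne_zero.mpr (Nat.succ_ne_zero r)
    push_cast at h; exact h
  have hF := factorial_ne_zero (K := K) r
  rw [div_add_div _ _ (mul_ne_zero hr hF) hF,
    div_eq_div_iff (mul_ne_zero hr hF) (mul_ne_zero (mul_ne_zero hr hF) hF)]
  ring

lemma gbin_succ (x : K) (r : ℕ) :
    gbin x (r + 1) = x * gbin (x - 1) r / (r + 1) := by
  rw [gbin, gbin, prod_shift]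
  have hfac : ((r+1).factorial : K) = (r+1) * (r.factorial : K) := by
    rw [Nat.factorial_succ]; push_cast; ring
  rw [hfac]
  have hr : ((r:K) + 1) ≠ 0 := by
    have h : ((r+1 : ℕ) : K) ≠ 0 := Nat.cast_ne_zero.mpr (Nat.succ_ne_zero r)
    push_cast at h; exact h
  field_simp

lemma gbin_zero_left (r : ℕ) : gbin (0 : K) (r + 1) = 0 := by
  rw [gbin, Finset.prod_eq_zero (Finset.mem_range.mpr (Nat.succ_pos r)) (by simp)]
  simp

end DuLiu

namespace DuLiu

variable {K : Type*} [Field K] [CharZero K]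

/-- The Hagen–Rothe family `A_k(a) = (a/(a+kz)) C(a+kz, k)` in polynomial form. -/
noncomputable def Ag (z a : K) : ℕ → K
  | 0 => 1
  | (k+1) => gbin (a + (k+1) * z) (k+1) - z * gbin (a + (k+1) * z - 1) k

@[simp] lemma Ag_zero (z a : K) : Ag z a 0 = 1 := rfl

lemma Ag_succ (z a : K) (k : ℕ) :
    Ag z a (k+1) = gbin (a + (k+1) * z) (k+1) - z * gbin (a + (k+1) * z - 1) k := rfl

lemma Ag_zero_left (z : K) (k : ℕ) : Ag z 0 (k+1) = 0 := by
  rw [Ag_succ, gbin_succ, zero_add]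
  have hk : ((k:K) + 1) ≠ 0 := by
    have h : ((k+1 : ℕ) : K) ≠ 0 := Nat.cast_ne_zero.mpr (Nat.succ_ne_zero k)
    push_cast at h; exact h
  field_simp
  ring

lemma Ag_rec (z a : K) (k : ℕ) :
    Ag z a (k+1) = Ag z (a-1) (k+1) + Ag z (a+z-1) k := by
  cases k with
  | zero =>
    simp only [Ag_succ, Ag_zero, gbin_zero, gbin_one, Nat.cast_zero, Nat.cast_one, zero_add,
      one_mul]
    ring
  | succ j =>
    rw [Ag_succ, Ag_succ, Ag_succ]
    push_cast
    have e1 : a - 1 + ((j:K) + 1 + 1) * z = a + ((j:K) + 1 + 1) * z - 1 := by ring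
    have e2 : a + z - 1 + ((j:K) + 1) * z = a + ((j:K) + 1 + 1) * z - 1 := by ring
    have e3 : a - 1 + ((j:K) + 1 + 1) * z - 1 = a + ((j:K) + 1 + 1) * z - 1 - 1 := by ring
    have e4 : a + z - 1 + ((j:K) + 1) * z - 1 = a + ((j:K) + 1 + 1) * z - 1 - 1 := by ring
    rw [e3, e4, e1, e2, gbin_pascal (a + ((j:K)+1+1) * z) (j+1),
      gbin_pascal (a + ((j:K)+1+1) * z - 1) j]
    ring

/-- `Esum z a c n = ∑ₖ A_k(a) C(c - kz, n-k)`. -/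
noncomputable def Esum (z a c : K) (n : ℕ) : K :=
  ∑ k ∈ Finset.range (n+1), Ag z a k * gbin (c - k * z) (n - k)

lemma Esum_zero (z a c : K) : Esum z a c 0 = 1 := by
  simp [Esum]

/-- Pascal recurrence in `c`. -/
lemma Esum_pascal (z a c : K) (n : ℕ) :
    Esum z a c (n+1) = Esum z a (c-1) (n+1) + Esum z a (c-1) n := by
  rw [Esum, Esum, Esum, Finset.sum_range_succ (n := n+1), Finset.sum_range_succ (n := n+1)]
  simp only [Nat.sub_self, gbin_zero, mul_one]
  rw [add_right_comm]
  congr 1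
  rw [← Finset.sum_add_distrib]
  refine Finset.sum_congr rfl fun k hk => ?_
  have hk' : k ≤ n := Nat.lt_succ_iff.mp (Finset.mem_range.mp hk)
  have h1 : (n+1) - k = (n - k) + 1 := by omega
  rw [h1, gbin_pascal, show c - (k:K) * z - 1 = c - 1 - (k:K) * z from by ring]
  ring

/-- the `A`-recurrence for `Esum`, in `a`. -/
lemma Esum_arec (z a c : K) (n : ℕ) :
    Esum z a c (n+1) = Esum z (a-1) c (n+1) + Esum z (a+z-1) (c-z) n := by
  rw [Esum, Esum, Esum]
  have key : ∀ k ∈ Finset.range (n+2), Ag z a k * gbin (c - k * z) ((n+1) - k)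
      = Ag z (a-1) k * gbin (c - k * z) ((n+1) - k)
        + (fun k => match k with
           | 0 => (0:K)
           | (j+1) => Ag z (a+z-1) j * gbin (c - z - j * z) (n - j)) k := by
    intro k hk
    cases k with
    | zero => simp
    | succ j =>
      dsimp only
      rw [Ag_rec, Nat.succ_sub_succ]
      have e1 : c - ((j:K) + 1) * z = c - z - (j:K) * z := by ring
      push_cast
      rw [e1]
      ring
  rw [Finset.sum_congr rfl key, Finset.sum_add_distrib]
  congr 1
  rw [Finset.sum_range_succ' (n := n+1)]
  simp

end DuLiu

namespace DuLiu

variable {K : Type*} [Field K] [CharZero K]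

/-- A polynomial whose evaluations are shift-invariant is constant. -/
lemma eval_const_of_shift (p : K[X]) (h : ∀ t : K, p.eval (t - 1) = p.eval t) (s t : K) :
    p.eval s = p.eval t := by
  have hn : ∀ n : ℕ, p.eval (n : K) = p.eval 0 := by
    intro n
    induction n with
    | zero => simp
    | succ n ih =>
      have := h ((n : K) + 1)
      simp only [add_sub_cancel_right] at this
      push_cast
      rw [← this, ih]
  have hq : p - C (p.eval 0) = 0 := by
    refine Polynomial.eq_zero_of_infinite_isRoot _ ?_
    refine Set.infinite_of_injective_forall_mem (f := fun n : ℕ => (n : K)) Nat.cast_injective ?_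
    intro n
    simp [Polynomial.IsRoot, hn n]
  have hp : ∀ u : K, p.eval u = p.eval 0 := by
    intro u
    have := congrArg (Polynomial.eval u) hq
    simpa [sub_eq_zero] using this
  rw [hp s, hp t]

/-- polynomial version of `gbin`. -/
noncomputable def gbinP (l : K[X]) (r : ℕ) : K[X] :=
  (∏ i ∈ Finset.range r, (l - C (i : K))) * C ((r.factorial : K))⁻¹

lemma gbinP_eval (l : K[X]) (r : ℕ) (t : K) :
    (gbinP l r).eval t = gbin (l.eval t) r := by
  simp [gbinP, gbin, Polynomial.eval_prod, div_eq_mul_inv]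

/-- polynomial version of `Ag` (in the variable `a`). -/
noncomputable def AgP (z : K) : ℕ → K[X]
  | 0 => 1
  | (k+1) => gbinP (X + C (((k:K)+1) * z)) (k+1) - C z * gbinP (X + C (((k:K)+1) * z - 1)) k

lemma AgP_eval (z : K) (k : ℕ) (t : K) : (AgP z k).eval t = Ag z t k := by
  cases k with
  | zero => simp [AgP]
  | succ k =>
    simp only [AgP, Ag_succ, Polynomial.eval_sub, Polynomial.eval_mul, Polynomial.eval_C,
      gbinP_eval, Polynomial.eval_add, Polynomial.eval_X]
    push_cast
    ring_nf

lemma Esum_zero_left (z c : K) (n : ℕ) : Esum z 0 c n = gbin c n := by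
  rw [Esum, Finset.sum_eq_single 0]
  · simp
  · intro k hk hk0
    obtain ⟨j, rfl⟩ := Nat.exists_eq_succ_of_ne_zero hk0
    rw [Ag_zero_left, zero_mul]
  · intro h
    exact absurd (Finset.mem_range.mpr (Nat.succ_pos n)) h

/-- `Esum z a (w - a) n` as a polynomial in `a`. -/
noncomputable def EsumP (z w : K) (n : ℕ) : K[X] :=
  ∑ k ∈ Finset.range (n+1), AgP z k * gbinP (C (w - k * z) - X) (n - k)

lemma EsumP_eval (z w : K) (n : ℕ) (a : K) : (EsumP z w n).eval a = Esum z a (w - a) n := by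
  rw [EsumP, Esum, Polynomial.eval_finset_sum]
  refine Finset.sum_congr rfl fun k hk => ?_
  rw [Polynomial.eval_mul, AgP_eval, gbinP_eval]
  congr 1
  simp only [Polynomial.eval_sub, Polynomial.eval_C, Polynomial.eval_X]
  ring

/-- The key vanishing identity (Gould-style). -/
theorem Esum_value (z : K) : ∀ (n : ℕ) (j : ℕ) (a : K),
    Esum z a (-a - j) n = gbin (-(j:K)) n := by
  intro n
  induction n with
  | zero => intro j a; rw [Esum_zero, gbin_zero]
  | succ n IH =>
    have const : ∀ (j : ℕ) (a : K),
        Esum z a (-a - j - 1) (n+1) = Esum z (a-1) (-a - j) (n+1) := by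
      intro j a
      have hp := Esum_pascal z a (-a - j) n
      have ha := Esum_arec z a (-a - j) n
      have h1 : Esum z a (-a - j - 1) n = gbin (-((j:K)+1)) n := by
        have := IH (j+1) a
        rw [show (-a - ((j+1:ℕ):K)) = (-a - j - 1) from by push_cast; ring] at this
        rw [this]; push_cast; ring_nf
      have h2 : Esum z (a+z-1) (-a - j - z) n = gbin (-((j:K)+1)) n := by
        have := IH (j+1) (a+z-1)
        rw [show (-(a+z-1) - ((j+1:ℕ):K)) = (-a - j - z) from by push_cast; ring] at this
        rw [this]; push_cast; ring_nf
      have hp' : Esum z a (-a - j) (n+1)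
          = Esum z a (-a - j - 1) (n+1) + gbin (-((j:K)+1)) n := by
        rw [hp, h1]
      have ha' : Esum z a (-a - j) (n+1)
          = Esum z (a-1) (-a - j) (n+1) + gbin (-((j:K)+1)) n := by
        rw [ha, show (-a - (j:K) - z) = (-a - j - z) from rfl, h2]
      have := hp'.symm.trans ha'
      exact add_right_cancel this
    have main : ∀ (j : ℕ) (a : K),
        Esum z a (-a - j - 1) (n+1) = gbin (-(j:K) - 1) (n+1) := by
      intro j a
      set p := EsumP z (-(j:K) - 1) (n+1) with hpdef
      have hev : ∀ t : K, p.eval t = Esum z t (-t - j - 1) (n+1) := by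
        intro t
        rw [hpdef, EsumP_eval]
        congr 1
        ring
      have hsh : ∀ t : K, p.eval (t - 1) = p.eval t := by
        intro t
        rw [hev, hev]
        have := const j t
        rw [show (-(t-1) - (j:K) - 1) = (-t - j) from by ring]
        exact this.symm
      have := eval_const_of_shift p hsh a 0
      rw [hev, hev] at this
      rw [this, show (-(0:K) - j - 1) = (-(j:K)-1) from by ring, Esum_zero_left]
    intro j a
    cases j with
    | zero =>
      have h0 := Esum_pascal z a (-a) n
      rw [show (-a - (1:K)) = -a - ((1:ℕ):K) from by push_cast; ring] at h0
      have hA : Esum z a (-a - ((1:ℕ):K)) (n+1) = gbin (-(1:K)) (n+1) := by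
        have := main 0 a
        rw [show (-a - ((0:ℕ):K) - 1) = (-a - ((1:ℕ):K)) from by push_cast; ring] at this
        rw [this]; norm_num
      have hB : Esum z a (-a - ((1:ℕ):K)) n = gbin (-(1:K)) n := by
        have := IH 1 a
        rw [this]; norm_num
      have hpas : gbin (0:K) (n+1) = gbin (-1) (n+1) + gbin (-1) n := by
        have := gbin_pascal (0:K) n
        norm_num at this
        exact this
      rw [show (-a - ((0:ℕ):K)) = -a from by push_cast; ring, h0, hA, hB,
        show (-((0:ℕ):K)) = (0:K) from by push_cast; ring, hpas]
    | succ j =>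
      have := main j a
      rw [show (-a - ((j+1:ℕ):K)) = (-a - j - 1) from by push_cast; ring, this,
        show (-((j+1:ℕ):K)) = (-(j:K)-1) from by push_cast; ring]

end DuLiu

namespace DuLiu

variable {K : Type*} [Field K] [CharZero K]

/-- `Ssum z a b n = ∑ₖ A_k(a) C(b + (n-k)z, n-k)`. -/
noncomputable def Ssum (z a b : K) (n : ℕ) : K :=
  ∑ k ∈ Finset.range (n+1), Ag z a k * gbin (b + ((n - k : ℕ) : K) * z) (n - k)

lemma Ssum_pascal (z a b : K) (n : ℕ) :
    Ssum z a b (n+1) = Ssum z a (b-1) (n+1) + Ssum z a (b+z-1) n := by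
  rw [Ssum, Ssum, Ssum, Finset.sum_range_succ (n := n+1), Finset.sum_range_succ (n := n+1)]
  simp only [Nat.sub_self, gbin_zero, mul_one]
  rw [add_right_comm]
  congr 1
  rw [← Finset.sum_add_distrib]
  refine Finset.sum_congr rfl fun k hk => ?_
  have hk' : k ≤ n := Nat.lt_succ_iff.mp (Finset.mem_range.mp hk)
  have h1 : (n+1) - k = (n - k) + 1 := by omega
  rw [h1]
  push_cast
  rw [show b - 1 + (((n-k:ℕ):K)+1) * z = b + (((n-k:ℕ):K)+1) * z - 1 from by ring,
    show b + z - 1 + ((n-k:ℕ):K) * z = b + (((n-k:ℕ):K)+1) * z - 1 from by ring,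
    gbin_pascal, mul_add]

theorem rothe (z : K) : ∀ (n : ℕ) (a b : K),
    Ssum z a b n = gbin (a + b + n * z) n := by
  intro n
  induction n with
  | zero => intro a b; simp [Ssum]
  | succ n IH =>
    intro a b
    set p : K[X] := (∑ k ∈ Finset.range (n+2),
        C (Ag z a k) * gbinP (X + C (((n+1-k : ℕ) : K) * z)) (n+1-k))
      - gbinP (X + C (a + ((n+1 : ℕ) : K) * z)) (n+1) with hpdef
    have hev : ∀ t : K, p.eval t = Ssum z a t (n+1) - gbin (a + t + ((n+1:ℕ):K) * z) (n+1) := by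
      intro t
      rw [hpdef]
      simp only [Polynomial.eval_sub, Polynomial.eval_finset_sum, Polynomial.eval_mul,
        Polynomial.eval_C, gbinP_eval, Polynomial.eval_add, Polynomial.eval_X, Ssum]
      rw [show t + (a + ((n+1:ℕ):K) * z) = a + t + ((n+1:ℕ):K) * z from by ring]
    have hsh : ∀ t : K, p.eval (t - 1) = p.eval t := by
      intro t
      rw [hev, hev]
      have h1 := Ssum_pascal z a t n
      have h2 : Ssum z a (t+z-1) n = gbin (a + t + ((n+1:ℕ):K) * z - 1) n := by
        rw [IH a (t+z-1)]
        congr 1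
        push_cast
        ring
      have h3 : gbin (a + t + ((n+1:ℕ):K) * z) (n+1)
          = gbin (a + (t-1) + ((n+1:ℕ):K) * z) (n+1) + gbin (a + t + ((n+1:ℕ):K) * z - 1) n := by
        rw [gbin_pascal]
        congr 2 <;> ring
      rw [h1, h2, h3]
      ring
    have hconst := eval_const_of_shift p hsh b (-a - ((n+1:ℕ):K) * z)
    rw [hev, hev] at hconst
    have hzero : Ssum z a (-a - ((n+1:ℕ):K) * z) (n+1)
        - gbin (a + (-a - ((n+1:ℕ):K) * z) + ((n+1:ℕ):K) * z) (n+1) = 0 := by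
      have hS : Ssum z a (-a - ((n+1:ℕ):K) * z) (n+1) = Esum z a (-a - ((0:ℕ):K)) (n+1) := by
        rw [Ssum, Esum]
        refine Finset.sum_congr rfl fun k hk => ?_
        have hk' : k ≤ n+1 := Nat.lt_succ_iff.mp (Finset.mem_range.mp hk)
        congr 1
        have : ((n+1-k : ℕ) : K) = ((n+1:ℕ):K) - k := by
          rw [Nat.cast_sub hk']
        rw [this]
        push_cast
        ring
      rw [hS, Esum_value z (n+1) 0 a]
      rw [show (-((0:ℕ):K)) = (0:K) from by push_cast; ring,
        show a + (-a - ((n+1:ℕ):K) * z) + ((n+1:ℕ):K) * z = (0:K) from by ring, sub_self]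
    rw [hzero] at hconst
    exact sub_eq_zero.mp hconst

theorem hagen (z a b : K) (n : ℕ) :
    ∑ k ∈ Finset.range (n+1), Ag z a k * Ag z b (n-k) = Ag z (a+b) n := by
  cases n with
  | zero => simp
  | succ n =>
    have key : ∀ k ∈ Finset.range (n+2), Ag z a k * Ag z b (n+1-k)
        = Ag z a k * gbin (b + ((n+1-k : ℕ) : K) * z) (n+1-k)
          - (if k ≤ n then z * (Ag z a k * gbin ((b+z-1) + ((n-k:ℕ):K) * z) (n-k)) else 0) := by
      intro k hk
      by_cases hkn : k ≤ n
      · rw [if_pos hkn]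
        have h1 : (n+1) - k = (n - k) + 1 := by omega
        rw [h1, Ag_succ]
        have e1 : b + ((n-k:ℕ)+1 : K) * z - 1 = (b+z-1) + ((n-k:ℕ):K) * z := by push_cast; ring
        push_cast
        rw [e1]
        ring
      · have hk2 : k = n+1 := by
          have := Finset.mem_range.mp hk; omega
        subst hk2
        rw [if_neg hkn, Nat.sub_self]
        simp
    rw [Finset.sum_congr rfl key, Finset.sum_sub_distrib]
    have hsplit : (∑ k ∈ Finset.range (n+2),
        (if k ≤ n then z * (Ag z a k * gbin ((b+z-1) + ((n-k:ℕ):K) * z) (n-k)) else 0))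
        = z * ∑ k ∈ Finset.range (n+1), Ag z a k * gbin ((b+z-1) + ((n-k:ℕ):K) * z) (n-k) := by
      rw [Finset.mul_sum]
      rw [← Finset.sum_subset (Finset.range_subset_range.mpr (by omega : n+1 ≤ n+2))]
      · refine Finset.sum_congr rfl fun k hk => ?_
        rw [if_pos (Nat.lt_succ_iff.mp (Finset.mem_range.mp hk))]
      · intro x hx hnx
        rw [if_neg]
        intro hc
        exact hnx (Finset.mem_range.mpr (by omega))
    rw [hsplit]
    have hR1 : (∑ k ∈ Finset.range (n+2), Ag z a k * gbin (b + ((n+1-k : ℕ) : K) * z) (n+1-k))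
        = gbin (a + b + ((n+1:ℕ):K) * z) (n+1) := by
      have := rothe z (n+1) a b
      rw [Ssum] at this
      rw [this]
    have hR2 : (∑ k ∈ Finset.range (n+1), Ag z a k * gbin ((b+z-1) + ((n-k:ℕ):K) * z) (n-k))
        = gbin (a + b + ((n+1:ℕ):K) * z - 1) n := by
      have := rothe z n a (b+z-1)
      rw [Ssum] at this
      rw [this]
      congr 1
      push_cast
      ring
    rw [hR1, hR2, Ag_succ]
    congr 2 <;> (push_cast; try ring)

end DuLiu

namespace DuLiu

variable {K : Type*} [Field K] [CharZero K]

/-- decompose a sum over `(r+1)`-tuples as a double sum. -/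
lemma sum_antidiagonalTuple_succ {M : Type*} [AddCommMonoid M] (r s : ℕ)
    (f : (Fin (r+1) → ℕ) → M) :
    ∑ k ∈ Finset.Nat.antidiagonalTuple (r+1) s, f k
      = ∑ p ∈ Finset.HasAntidiagonal.antidiagonal s, ∑ x ∈ Finset.Nat.antidiagonalTuple r p.2,
          f (Fin.cons p.1 x) := by
  rw [← Finset.sum_sigma ((Finset.HasAntidiagonal.antidiagonal s))
    (fun p => Finset.Nat.antidiagonalTuple r p.2) (fun q => f (Fin.cons q.1.1 q.2))]
  refine (Finset.sum_bij' (fun k _ => (⟨(k 0, s - k 0), Fin.tail k⟩ :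
      (_ : ℕ × ℕ) × (Fin r → ℕ))) (fun q _ => Fin.cons q.1.1 q.2) ?_ ?_ ?_ ?_ ?_)
  · intro k hk
    have hsum : k 0 + ∑ i : Fin r, Fin.tail k i = s := by
      have hk' := Finset.Nat.mem_antidiagonalTuple.mp hk
      rw [Fin.sum_univ_succ] at hk'
      simpa only [Fin.tail] using hk'
    rw [Finset.mem_sigma]
    dsimp only
    constructor
    · rw [Finset.HasAntidiagonal.mem_antidiagonal]
      omega
    · rw [Finset.Nat.mem_antidiagonalTuple]
      omega
  · intro q hq
    rw [Finset.mem_sigma] at hq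
    rw [Finset.Nat.mem_antidiagonalTuple, Fin.sum_cons,
      Finset.Nat.mem_antidiagonalTuple.mp hq.2]
    exact Finset.HasAntidiagonal.mem_antidiagonal.mp hq.1
  · intro k hk
    exact Fin.cons_self_tail k
  · rintro ⟨⟨q1, q2⟩, t⟩ hq
    rw [Finset.mem_sigma] at hq
    have h1 := Finset.HasAntidiagonal.mem_antidiagonal.mp hq.1
    dsimp only at h1 ⊢
    simp only [Fin.cons_zero, Fin.tail_cons]
    have h2 : s - q1 = q2 := by omega
    rw [h2]
  · intro k hk
    rw [Fin.cons_self_tail k]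

theorem multi_hagen (z aa : K) : ∀ (r : ℕ) (s : ℕ),
    ∑ k ∈ Finset.Nat.antidiagonalTuple r s, ∏ i, Ag z aa (k i) = Ag z ((r : K) * aa) s := by
  intro r
  induction r with
  | zero =>
    intro s
    cases s with
    | zero => simp
    | succ s =>
      rw [Finset.Nat.antidiagonalTuple_zero_succ, Finset.sum_empty,
        show ((0:ℕ):K) * aa = 0 from by push_cast; ring, Ag_zero_left]
  | succ r IH =>
    intro s
    rw [sum_antidiagonalTuple_succ]
    have h1 : ∀ p ∈ Finset.HasAntidiagonal.antidiagonal s,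
        (∑ x ∈ Finset.Nat.antidiagonalTuple r p.2, ∏ i, Ag z aa ((Fin.cons p.1 x : Fin (r+1) → ℕ) i))
          = Ag z aa p.1 * Ag z ((r:K) * aa) p.2 := by
      intro p hp
      rw [← IH p.2, Finset.mul_sum]
      refine Finset.sum_congr rfl fun x hx => ?_
      rw [Fin.prod_univ_succ]
      simp only [Fin.cons_zero, Fin.cons_succ]
    rw [Finset.sum_congr rfl h1, Finset.Nat.sum_antidiagonal_eq_sum_range_succ_mk, hagen]
    congr 1
    push_cast
    ring

end DuLiu

namespace DuLiuTrees

variable {m : ℕ}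

lemma internalsS_empty (T : MTree (m + 1)) :
    T.internalsS (∅ : Finset (Fin m)) = T.internals := by
  induction T with
  | leaf => rfl
  | node c ih =>
    rw [MTree.internalsS, MTree.internals]
    congr 1
    rw [show ((∅ : Finset (Fin m)).image Fin.castSucc)ᶜ = (Finset.univ : Finset (Fin (m+1)))
      from by simp]
    exact Finset.sum_congr rfl fun i _ => ih i

lemma hookProdS_empty_node {R : Type*} [CommSemiring R] (f : ℕ → R) (c : Fin (m+1) → MTree (m+1)) :
    MTree.hookProdS (∅ : Finset (Fin m)) f (MTree.node c)
      = f ((MTree.node c).internals) * ∏ i, MTree.hookProdS ∅ f (c i) := by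
  rw [MTree.hookProdS, internalsS_empty]

lemma internals_node (c : Fin (m+1) → MTree (m+1)) :
    (MTree.node c).internals = 1 + ∑ i, (c i).internals := rfl

/-- Trees with at most `n` internal vertices form a finite set. -/
lemma finite_le (n : ℕ) : {T : MTree (m+1) | T.internals ≤ n}.Finite := by
  induction n with
  | zero =>
    refine Set.Finite.subset (Set.finite_singleton MTree.leaf) ?_
    rintro T hT
    cases T with
    | leaf => rfl
    | node c =>
      exfalso
      simp only [Set.mem_setOf_eq, internals_node] at hT
      omega
  | succ n ih =>
    refine Set.Finite.subset (Set.Finite.insert MTree.leaf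
      (Set.Finite.image MTree.node (Set.Finite.pi (fun _ : Fin (m+1) => ih)))) ?_
    rintro T hT
    cases T with
    | leaf => exact Set.mem_insert _ _
    | node c =>
      refine Set.mem_insert_of_mem _ ⟨c, ?_, rfl⟩
      simp only [Set.mem_setOf_eq, internals_node] at hT
      intro i _
      simp only [Set.mem_setOf_eq]
      have hle : (c i).internals ≤ ∑ j, (c j).internals :=
        Finset.single_le_sum (f := fun j => (c j).internals) (fun j _ => Nat.zero_le _)
          (Finset.mem_univ i)
      omega

lemma finite_eq (n : ℕ) : {T : MTree (m+1) | T.internals = n}.Finite :=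
  Set.Finite.subset (finite_le n) (fun T hT => le_of_eq hT)

lemma node_injective : Function.Injective (MTree.node (m := m+1)) := by
  intro c d h
  injection h

end DuLiuTrees

namespace DuLiuTrees

variable {m : ℕ} {R : Type*} [CommSemiring R]

/-- The sum of hook products over all trees with `n` internal vertices. -/
noncomputable def P (m : ℕ) (f : ℕ → R) (n : ℕ) : R :=
  ∑ᶠ T ∈ {T : MTree (m+1) | T.internals = n}, T.hookProdS (∅ : Finset (Fin m)) f

lemma P_eq_sum (f : ℕ → R) (n : ℕ) :
    P m f n = ∑ T ∈ (finite_eq (m := m) n).toFinset, T.hookProdS (∅ : Finset (Fin m)) f := by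
  rw [P, ← finsum_mem_coe_finset, Set.Finite.coe_toFinset]

lemma P_zero (f : ℕ → R) : P m f 0 = 1 := by
  have hset : {T : MTree (m+1) | T.internals = 0} = {MTree.leaf} := by
    ext T
    cases T with
    | leaf => simp [MTree.internals]
    | node c =>
      simp only [Set.mem_setOf_eq, internals_node, Set.mem_singleton_iff]
      constructor
      · intro h; omega
      · intro h; exact absurd h (by intro hc; cases hc)
  rw [P, hset, finsum_mem_singleton]
  rfl

lemma P_succ (f : ℕ → R) (n : ℕ) :
    P m f (n+1)
      = f (n+1) * ∑ k ∈ Finset.Nat.antidiagonalTuple (m+1) n, ∏ i, P m f (k i) := by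
  classical
  set CLE := (finite_le (m := m) n).toFinset with hCLE
  set Cf : Finset (Fin (m+1) → MTree (m+1)) :=
    (Fintype.piFinset fun _ => CLE).filter (fun c => ∑ i, (c i).internals = n) with hCf
  have hmemCf : ∀ c : Fin (m+1) → MTree (m+1), c ∈ Cf ↔ ∑ i, (c i).internals = n := by
    intro c
    rw [hCf, Finset.mem_filter]
    constructor
    · exact fun h => h.2
    · intro h
      refine ⟨Fintype.mem_piFinset.mpr fun i => ?_, h⟩
      rw [hCLE, Set.Finite.mem_toFinset]
      have hle : (c i).internals ≤ ∑ j, (c j).internals :=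
        Finset.single_le_sum (f := fun j => (c j).internals) (fun j _ => Nat.zero_le _)
          (Finset.mem_univ i)
      simp only [Set.mem_setOf_eq]
      omega
  have step1 : (finite_eq (m := m) (n+1)).toFinset = Cf.image MTree.node := by
    ext T
    rw [Set.Finite.mem_toFinset, Set.mem_setOf_eq, Finset.mem_image]
    constructor
    · intro hT
      cases T with
      | leaf => exact absurd hT (by rw [MTree.internals]; omega)
      | node c =>
        rw [internals_node] at hT
        exact ⟨c, (hmemCf c).mpr (by omega), rfl⟩
    · rintro ⟨c, hc, rfl⟩
      rw [internals_node, (hmemCf c).mp hc]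
      omega
  rw [P_eq_sum, step1, Finset.sum_image (fun a _ b _ h => node_injective h)]
  have step2 : ∀ c ∈ Cf, (MTree.node c).hookProdS (∅ : Finset (Fin m)) f
      = f (n+1) * ∏ i, (c i).hookProdS (∅ : Finset (Fin m)) f := by
    intro c hc
    rw [hookProdS_empty_node, internals_node, (hmemCf c).mp hc, Nat.add_comm 1 n]
  rw [Finset.sum_congr rfl step2, ← Finset.mul_sum]
  congr 1
  have hmaps : ∀ c ∈ Cf, (fun i => (c i).internals) ∈ Finset.Nat.antidiagonalTuple (m+1) n :=
    fun c hc => Finset.Nat.mem_antidiagonalTuple.mpr ((hmemCf c).mp hc)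
  rw [← Finset.sum_fiberwise_of_maps_to hmaps]
  refine Finset.sum_congr rfl fun k hk => ?_
  have hfiber : Cf.filter (fun c => (fun i => (c i).internals) = k)
      = Fintype.piFinset (fun i => (finite_eq (m := m) (k i)).toFinset) := by
    ext c
    rw [Finset.mem_filter, Fintype.mem_piFinset, hmemCf]
    constructor
    · rintro ⟨hsum, hfun⟩
      intro i
      rw [Set.Finite.mem_toFinset, Set.mem_setOf_eq, ← congrFun hfun i]
    · intro h
      have h' : ∀ i, (c i).internals = k i := by
        intro i
        have := h i
        rwa [Set.Finite.mem_toFinset, Set.mem_setOf_eq] at this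
      constructor
      · rw [Finset.sum_congr rfl (fun i _ => h' i)]
        exact Finset.Nat.mem_antidiagonalTuple.mp hk
      · funext i; exact h' i
  rw [hfiber, ← Finset.prod_univ_sum]
  refine Finset.prod_congr rfl fun i _ => ?_
  rw [P_eq_sum]

end DuLiuTrees

-- ===== Part III: the closed form and the main identity =====

noncomputable instance : CharZero (RatFunc ℚ) :=
  charZero_of_injective_algebraMap (IsFractionRing.injective (Polynomial ℚ) (RatFunc ℚ))

namespace DuLiu

/-- The closed form of the Du–Liu hook length sum. -/
noncomputable def q (m n : ℕ) : ℚ[X] :=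
  if n = 0 then 1 else
    C ((n.factorial : ℚ)⁻¹) * ((X : ℚ[X]) + 1) *
      ∏ i ∈ Finset.Icc 1 (n - 1),
        (C ((m : ℚ) * n + (i : ℚ) + 1) * ((X : ℚ[X]) + 1) - C (((m : ℚ) + 1) * (i : ℚ)))

end DuLiu

namespace DuLiu

variable {K : Type*} [Field K] [CharZero K]

lemma gbin_div {β : K} (hβ : β ≠ 0) (x : K) (r : ℕ) :
    β ^ r * gbin (x / β) r = (∏ i ∈ Finset.range r, (x - β * i)) / (r.factorial : K) := by
  rw [gbin, ← mul_div_assoc]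
  congr 1
  have hterm : ∀ i ∈ Finset.range r, x / β - (i:K) = (x - β * i) / β :=
    fun i _ => by field_simp
  rw [Finset.prod_congr rfl hterm, Finset.prod_div_distrib, Finset.prod_const,
    Finset.card_range, mul_comm, div_mul_cancel₀ _ (pow_ne_zero r hβ)]

lemma Ag_closed {β : K} (hβ : β ≠ 0) (u cm c : K) (t : ℕ) :
    β ^ (t+1) * Ag (cm * u / β) (u * c / β) (t+1)
      = (c * u / (((t+1).factorial : ℕ) : K)) *
          ∏ i ∈ Finset.range t, ((cm * ((t:K)+1) + c) * u - β * ((i:K)+1)) := by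
  set z := cm * u / β with hz
  set w := (cm * ((t:K)+1) + c) * u with hw
  have harg1 : u * c / β + ((t:K)+1) * z = w / β := by
    rw [hz, hw]; field_simp; ring
  have harg2 : w / β - 1 = (w - β) / β := by field_simp
  have hβz : β * z = cm * u := by rw [hz]; field_simp
  rw [Ag_succ, harg1, harg2, mul_sub, pow_succ]
  have e1 : β ^ t * β * gbin (w / β) (t+1) = β ^ (t+1) * gbin (w / β) (t+1) := by
    rw [pow_succ]
  have e2 : β ^ t * β * (z * gbin ((w - β) / β) t)
      = (cm * u) * (β ^ t * gbin ((w - β) / β) t) := by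
    rw [← hβz]; ring
  rw [e1, e2, gbin_div hβ, gbin_div hβ]
  have e3 : (∏ i ∈ Finset.range (t+1), (w - β * i))
      = (∏ i ∈ Finset.range t, (w - β * ((i:K)+1))) * w := by
    rw [Finset.prod_range_succ']
    congr 1
    · exact Finset.prod_congr rfl fun i _ => by push_cast; ring
    · simp
  have e4 : (∏ i ∈ Finset.range t, (w - β - β * i))
      = ∏ i ∈ Finset.range t, (w - β * ((i:K)+1)) :=
    Finset.prod_congr rfl fun i _ => by push_cast; ring
  rw [e3, e4]
  have hfac : (((t+1).factorial : ℕ) : K) = ((t:K)+1) * ((t.factorial : ℕ) : K) := by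
    rw [Nat.factorial_succ]; push_cast; ring
  have hft : ((t.factorial : ℕ) : K) ≠ 0 := factorial_ne_zero t
  have ht1 : ((t:K)+1) ≠ 0 := by
    have h : ((t+1 : ℕ) : K) ≠ 0 := Nat.cast_ne_zero.mpr (Nat.succ_ne_zero t)
    push_cast at h; exact h
  rw [hfac, hw]
  field_simp
  ring

end DuLiu


namespace DuLiu

lemma key_identity (m s : ℕ) :
    ((X : ℚ[X]) + C (((s+1 : ℕ) : ℚ)⁻¹)) *
        ∑ k ∈ Finset.Nat.antidiagonalTuple (m+1) s, ∏ i, q m (k i) = q m (s+1) := by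
  apply IsFractionRing.injective ℚ[X] (RatFunc ℚ)
  set K := RatFunc ℚ
  set φ : ℚ[X] →+* K := (algebraMap ℚ[X] K : ℚ[X] →+* K) with hφ
  have hφC : ∀ r : ℚ, φ (C r) = (algebraMap ℚ K) r := by
    intro r
    rw [IsScalarTower.algebraMap_apply ℚ ℚ[X] K r, Polynomial.algebraMap_eq]
  set xK := φ X with hxK
  set u : K := xK + 1 with hu
  set β : K := ((m : K) + 1) - u with hβdef
  have hβeq : β = φ ((m : ℚ[X]) - X) := by
    rw [hβdef, hu, map_sub, map_natCast]
    ring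
  have hβ : β ≠ 0 := by
    rw [hβeq]
    intro h
    have h0 : ((m : ℚ[X]) - X) = 0 := IsFractionRing.injective ℚ[X] K (by rw [h, map_zero])
    have := congrArg (fun p => Polynomial.coeff p 1) h0
    simp only [Polynomial.coeff_sub, Polynomial.coeff_natCast_ite, Polynomial.coeff_X_one,
      Polynomial.coeff_zero] at this
    norm_num at this
  set z : K := (m : K) * u / β with hz
  -- the closed form in K
  have qhat : ∀ j : ℕ, φ (q m j) = β ^ j * Ag z (u * 1 / β) j := by
    intro j
    cases j with
    | zero => rw [q, if_pos rfl, map_one, pow_zero, Ag_zero, mul_one]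
    | succ t =>
      rw [q, if_neg (Nat.succ_ne_zero t)]
      have hAg := Ag_closed (K := K) hβ u (m : K) 1 t
      have hzz : (m : K) * u / β = z := rfl
      rw [hzz] at hAg
      rw [hAg]
      rw [map_mul, map_mul, hφC, map_prod]
      have hXu : φ (X + 1) = u := by rw [map_add, map_one, hu, hxK]
      rw [hXu]
      have hIcc : Finset.Icc 1 (t + 1 - 1) = Finset.Ico 1 (t+1) := by
        rw [Finset.Ico_add_one_right_eq_Icc]
        norm_num
      rw [hIcc, Finset.prod_Ico_eq_prod_range]
      simp only [Nat.add_sub_cancel]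
      have hterm : ∀ i ∈ Finset.range t,
          φ (C ((m:ℚ) * ((t+1:ℕ):ℚ) + ((1+i :ℕ):ℚ) + 1) * (X + 1) - C (((m:ℚ) + 1) * ((1+i:ℕ):ℚ)))
            = (((m:K) * ((t:K)+1) + 1) * u - β * ((i:K)+1)) := by
        intro i _
        rw [map_sub, map_mul, hφC, hφC, hXu]
        simp only [map_add, map_mul, map_one, map_natCast]
        push_cast
        rw [hβdef, hu]
        ring
      rw [Finset.prod_congr rfl hterm]
      have hfacinv : (algebraMap ℚ K) (((t+1).factorial : ℚ))⁻¹
          = ((((t+1).factorial : ℕ)) : K)⁻¹ := by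
        rw [map_inv₀, map_natCast]
      rw [map_inv₀, map_natCast]
      rw [one_mul, div_eq_mul_inv]
      ring
  -- now the main computation
  rw [map_mul, map_sum]
  have hsum : ∀ k ∈ Finset.Nat.antidiagonalTuple (m+1) s,
      φ (∏ i, q m (k i)) = β ^ s * ∏ i, Ag z (u * 1 / β) (k i) := by
    intro k hk
    rw [map_prod]
    have : ∀ i ∈ Finset.univ, φ (q m (k i)) = β ^ (k i) * Ag z (u * 1 / β) (k i) :=
      fun i _ => qhat (k i)
    rw [Finset.prod_congr rfl this, Finset.prod_mul_distrib, Finset.prod_pow_eq_pow_sum,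
      Finset.Nat.mem_antidiagonalTuple.mp hk]
  rw [Finset.sum_congr rfl hsum, ← Finset.mul_sum]
  have hmulti := multi_hagen z (u * 1 / β) (m+1) s
  rw [hmulti, qhat (s+1)]
  have hφx : φ (X + C (((s+1:ℕ):ℚ)⁻¹)) = xK + (((s+1:ℕ)):K)⁻¹ := by
    rw [map_add, hφC, map_inv₀, map_natCast, hxK]
  rw [hφx]
  -- final scalar computation
  have harg : ((m+1 : ℕ) : K) * (u * 1 / β) = u * ((m:K)+1) / β := by
    push_cast
    ring
  rw [harg]
  cases s with
  | zero =>
    rw [Ag_zero, pow_zero, pow_one]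
    have hAg1 : Ag z (u * 1 / β) 1 = u * 1 / β := by
      rw [Ag_succ, gbin_one, gbin_zero, Nat.cast_zero, zero_add, one_mul, mul_one]
      ring
    rw [hAg1]
    rw [mul_one, mul_one, mul_div_cancel₀ _ hβ]
    norm_num
    exact hu.symm
  | succ t =>
    rw [Ag_closed hβ u (m : K) ((m:K)+1) t, Ag_closed hβ u (m : K) 1 (t+1)]
    rw [Finset.prod_range_succ]
    have hprod : ∀ i ∈ Finset.range t,
        ((m:K) * (((t+1:ℕ):K)+1) + 1) * u - β * ((i:K)+1)
          = ((m:K) * ((t:K)+1) + ((m:K)+1)) * u - β * ((i:K)+1) := by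
      intro i _
      push_cast
      ring
    rw [Finset.prod_congr rfl hprod]
    set PP := ∏ i ∈ Finset.range t, (((m:K) * ((t:K)+1) + ((m:K)+1)) * u - β * ((i:K)+1)) with hPP
    have hfac2 : (((t+1+1).factorial : ℕ) : K)
        = (((t:K)+1)+1) * (((t+1).factorial : ℕ) : K) := by
      rw [Nat.factorial_succ, Nat.cast_mul]
      push_cast
      ring
    have hf1 : ((((t+1).factorial : ℕ)) : K) ≠ 0 := factorial_ne_zero _
    have ht2 : (((t:K)+1)+1) ≠ 0 := by
      have h : ((t+2 : ℕ) : K) ≠ 0 := Nat.cast_ne_zero.mpr (by omega)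
      push_cast at h
      intro hc
      apply h
      rw [← hc]
      ring
    have hlast : ((m:K) * (((t+1:ℕ):K)+1) + 1) * u - β * (((t:ℕ):K)+1)
        = ((m:K) * (((t:K)+1)+1) + 1) * u - β * ((t:K)+1) := by
      push_cast; ring
    rw [hlast, hfac2]
    rw [hβdef, hu]
    push_cast
    field_simp
    ring

theorem P_eq_q (m : ℕ) : ∀ n : ℕ,
    DuLiuTrees.P (R := ℚ[X]) m (fun h => X + C ((h : ℚ)⁻¹)) n = q m n := by
  intro n
  induction n using Nat.strong_induction_on with
  | _ n IH =>
    cases n with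
    | zero => rw [DuLiuTrees.P_zero, q, if_pos rfl]
    | succ s =>
      rw [DuLiuTrees.P_succ]
      have hsum : ∀ k ∈ Finset.Nat.antidiagonalTuple (m+1) s,
          (∏ i, DuLiuTrees.P (R := ℚ[X]) m (fun h => X + C ((h : ℚ)⁻¹)) (k i))
            = ∏ i, q m (k i) := by
        intro k hk
        refine Finset.prod_congr rfl fun i _ => ?_
        refine IH (k i) ?_
        have hle : k i ≤ ∑ j, k j :=
          Finset.single_le_sum (f := fun j => k j) (fun j _ => Nat.zero_le _)
            (Finset.mem_univ i)
        rw [Finset.Nat.mem_antidiagonalTuple.mp hk] at hle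
        omega
      rw [Finset.sum_congr rfl hsum, ← key_identity m s]

end DuLiu

/-- **Du–Liu hook length formula for `(m+1)`-ary trees, first form.**
For `m ≥ 1` and `n ≥ 1`,
`∑_{T ∈ 𝒯_{n,m+1}} ∏_{v} (x + 1/h_v)
  = ((x+1)/n!) ∏_{i=1}^{n-1} ((mn+i+1)(x+1) - (m+1)i)` in `ℚ[x]`, where `h_v` is
the number of internal vertices of the subtree rooted at `v` (this is the case
`S = ∅` of the second kind of hook length). -/
theorem du_liu_hook_length_formula (m n : ℕ) (hm : 1 ≤ m) (hn : 1 ≤ n) :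
    (∑ᶠ T ∈ {T : MTree (m + 1) | T.internals = n},
        MTree.hookProdS (∅ : Finset (Fin m))
          (fun h => (X : ℚ[X]) + C ((h : ℚ)⁻¹)) T)
      = C ((n.factorial : ℚ)⁻¹) * ((X : ℚ[X]) + 1) *
          ∏ i ∈ Finset.Icc 1 (n - 1),
            (C ((m : ℚ) * n + (i : ℚ) + 1) * ((X : ℚ[X]) + 1) -
              C (((m : ℚ) + 1) * (i : ℚ))) := by
  have h := DuLiu.P_eq_q m n
  rw [DuLiuTrees.P] at h
  rw [h, DuLiu.q, if_neg (by omega)]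
end
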